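/- arXiv:1901.03803 — 10 statements merged into one kernel-verified Lean document; each statement's English description precedes it below -/
import Mathlib

section
/- Let H be a complex Hilbert space, (X,μ) a σ-finite measure space, and f : X → H a weakly measurable map such that for every h ∈ H the scalar function x ↦ ⟨h, f(x)⟩ belongs to L²(X,μ). Then sup over h with ‖h‖ = 1 of the L²-norm of x ↦ ⟨h, f(x)⟩ is finite; equivalently, there exists B < ∞ such that ∫_X |⟨h, f(x)⟩|² dμ(x) ≤ B‖h‖² for all h ∈ H, i.e., f is a c-Bessel mapping for H. -/
open MeasureTheory
open scoped ENNReal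

/-- If `f : X → H` is weakly measurable on a σ-finite measure space and
`x ↦ ⟨h, f x⟫` is in `L²(X, μ)` for every `h ∈ H`, then `f` is a c-Bessel mapping:
there is `B` with `∫ |⟨h, f x⟩|² dμ ≤ B ‖h‖²` for all `h`. -/
theorem cBessel_of_weakly_measurable_memL2
    {H : Type*} [NormedAddCommGroup H] [InnerProductSpace ℂ H] [CompleteSpace H]
    {X : Type*} [MeasurableSpace X] (μ : Measure X) [SigmaFinite μ]
    (f : X → H)
    (hmeas : ∀ h : H, Measurable fun x => (inner ℂ h (f x) : ℂ))
    (hL2 : ∀ h : H, MemLp (fun x => (inner ℂ h (f x) : ℂ)) 2 μ) :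
    ∃ B : ℝ, ∀ h : H,
      ∫⁻ x, (‖(inner ℂ h (f x) : ℂ)‖₊ : ℝ≥0∞) ^ 2 ∂μ ≤ ENNReal.ofReal (B * ‖h‖ ^ 2) := by
  haveI : Fact (1 ≤ (2 : ℝ≥0∞)) := ⟨by norm_num⟩
  -- the (real-linear) analysis operator
  let T : H →ₗ[ℝ] Lp ℂ 2 μ :=
  { toFun := fun h => (hL2 h).toLp _
    map_add' := fun h h' => by
      rw [← MemLp.toLp_add (hL2 h) (hL2 h')]
      exact MemLp.toLp_congr _ _ (Filter.EventuallyEq.of_eq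
        (funext fun x => inner_add_left h h' (f x)))
    map_smul' := fun r h => by
      simp only [RingHom.id_apply]
      rw [← MemLp.toLp_const_smul r (hL2 h)]
      refine MemLp.toLp_congr _ _ (Filter.EventuallyEq.of_eq (funext fun x => ?_))
      show inner ℂ (r • h) (f x) = r • inner ℂ h (f x)
      rw [← Complex.coe_smul r h, inner_smul_left, Complex.conj_ofReal,
        Complex.real_smul] }
  have hT : Continuous T := by
    refine T.continuous_of_seq_closed_graph fun u x y hu hTu => ?_
    -- convergence in L² norm
    have htends : Filter.Tendsto
        (fun n => eLpNorm ((fun a => (inner ℂ (u n) (f a) : ℂ)) - ⇑y) 2 μ)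
        Filter.atTop (nhds 0) := by
      rw [← Lp.tendsto_Lp_iff_tendsto_eLpNorm'' (fun n a => (inner ℂ (u n) (f a) : ℂ))
        (fun n => hL2 (u n)) (⇑y) (Lp.memLp y)]
      rwa [Lp.toLp_coeFn y (Lp.memLp y)]
    have hmeas' : TendstoInMeasure μ (fun n a => (inner ℂ (u n) (f a) : ℂ)) Filter.atTop y :=
      tendstoInMeasure_of_tendsto_eLpNorm (p := 2) two_ne_zero
        (fun n => (hL2 (u n)).aestronglyMeasurable) (Lp.aestronglyMeasurable y) htends
    obtain ⟨ns, hns, hae⟩ := hmeas'.exists_seq_tendsto_ae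
    have hxlim : ∀ a, Filter.Tendsto (fun i => (inner ℂ (u (ns i)) (f a) : ℂ))
        Filter.atTop (nhds (inner ℂ x (f a))) := fun a =>
      ((hu.comp hns.tendsto_atTop).inner tendsto_const_nhds)
    have hy_eq : ⇑y =ᵐ[μ] fun a => (inner ℂ x (f a) : ℂ) := by
      filter_upwards [hae] with a ha
      exact tendsto_nhds_unique ha (hxlim a)
    have : T x = y := by
      show (hL2 x).toLp _ = y
      rw [← Lp.toLp_coeFn y (Lp.memLp y)]
      exact MemLp.toLp_congr _ _ hy_eq.symm
    exact this.symm
  let T' : H →L[ℝ] Lp ℂ 2 μ := ⟨T, hT⟩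
  refine ⟨‖T'‖ ^ 2, fun h => ?_⟩
  have key : ∫⁻ x, (‖(inner ℂ h (f x) : ℂ)‖₊ : ℝ≥0∞) ^ 2 ∂μ
      = (eLpNorm (fun x => (inner ℂ h (f x) : ℂ)) 2 μ) ^ 2 := by
    rw [eLpNorm_eq_lintegral_rpow_enorm_toReal two_ne_zero ENNReal.ofNat_ne_top]
    have h2 : ((2 : ℝ≥0∞)).toReal = (2 : ℝ) := by norm_num
    rw [h2, ← ENNReal.rpow_natCast _ 2, ← ENNReal.rpow_mul]
    norm_num
    rfl
  have hfin : eLpNorm (fun x => (inner ℂ h (f x) : ℂ)) 2 μ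
      = ENNReal.ofReal ‖T' h‖ := by
    have : ‖T' h‖ = (eLpNorm (fun x => (inner ℂ h (f x) : ℂ)) 2 μ).toReal :=
      Lp.norm_toLp _ (hL2 h)
    rw [this, ENNReal.ofReal_toReal (hL2 h).2.ne]
  rw [key, hfin, ← ENNReal.ofReal_pow (norm_nonneg _)]
  refine ENNReal.ofReal_le_ofReal ?_
  calc ‖T' h‖ ^ 2 ≤ (‖T'‖ * ‖h‖) ^ 2 :=
        pow_le_pow_left₀ (norm_nonneg _) (T'.le_opNorm h) 2
    _ = ‖T'‖ ^ 2 * ‖h‖ ^ 2 := mul_pow _ _ _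
end

section
/- Let H be a complex Hilbert space, (X,μ) a σ-finite measure space, and f : X → H weakly measurable. Then f is a c-Bessel mapping for H if and only if for every g ∈ L²(X,μ) the weak integral ∫_X g f dμ exists in H, i.e., there exists v ∈ H such that ⟨v, h⟩ = ∫_X g(x)⟨f(x), h⟩ dμ(x) for all h ∈ H. -/
open MeasureTheory Filter
open scoped ENNReal NNReal Topology


lemma lintegral_nnnorm_sq_eq {X : Type*} [MeasurableSpace X] {μ : Measure X} (q : X → ℂ) :
    ∫⁻ x, (‖q x‖₊ : ℝ≥0∞) ^ 2 ∂μ = (eLpNorm q 2 μ) ^ 2 := by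
  rw [eLpNorm_eq_lintegral_rpow_enorm_toReal two_ne_zero ENNReal.ofNat_ne_top]
  rw [← ENNReal.rpow_natCast _ 2, ← ENNReal.rpow_mul]
  norm_num
  simp only [enorm_eq_nnnorm]

lemma memLp_two_of_integrable_mul {X : Type*} [MeasurableSpace X] {μ : Measure X} [SigmaFinite μ]
    {k : X → ℂ} (hk : Measurable k)
    (hint : ∀ g : Lp ℂ 2 μ, Integrable (fun x => (g : X → ℂ) x * k x) μ) :
    MemLp k 2 μ := by
  haveI : Fact ((1:ℝ≥0∞) ≤ 2) := ⟨one_le_two⟩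
  set E : ℕ → Set X := fun n => spanningSets μ n ∩ {x | ‖k x‖ ≤ n} with hE
  have hEmeas : ∀ n, MeasurableSet (E n) := fun n =>
    (measurableSet_spanningSets μ n).inter (measurableSet_le hk.norm measurable_const)
  have hEmono : Monotone E := by
    intro m n hmn
    apply Set.inter_subset_inter (monotone_spanningSets μ hmn)
    intro x hx
    have hx' : ‖k x‖ ≤ (m:ℝ) := hx
    exact hx'.trans (Nat.cast_le.mpr hmn)
  have hmem : ∀ n : ℕ, MemLp ((E n).indicator fun x => star (k x)) 2 μ := by
    intro n
    have hks : Measurable fun x => star (k x) := continuous_star.measurable.comp hk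
    apply MemLp.of_le (memLp_indicator_const 2 (hEmeas n) (n:ℝ)
      (Or.inr (lt_of_le_of_lt (measure_mono Set.inter_subset_left)
        (measure_spanningSets_lt_top μ n)).ne))
      ((hks.indicator (hEmeas n)).aestronglyMeasurable)
    refine Filter.Eventually.of_forall fun x => ?_
    by_cases hx : x ∈ E n
    · rw [Set.indicator_of_mem hx, Set.indicator_of_mem hx, norm_star]
      calc ‖k x‖ ≤ (n:ℝ) := hx.2
        _ ≤ ‖(n:ℝ)‖ := le_abs_self _
    · simp [Set.indicator_of_notMem hx]
  set w : ℕ → Lp ℂ 2 μ := fun n => (hmem n).toLp _ with hw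
  have hwcoe : ∀ n, (w n : X → ℂ) =ᵐ[μ] (E n).indicator fun x => star (k x) := fun n =>
    MemLp.coeFn_toLp _
  -- pointwise boundedness
  have hpt : ∀ g : Lp ℂ 2 μ, ∃ C, ∀ n, ‖(innerSL ℂ (w n)) g‖ ≤ C := by
    intro g
    refine ⟨∫ x, ‖(g : X → ℂ) x * k x‖ ∂μ, fun n => ?_⟩
    have h1 : (innerSL ℂ (w n)) g = ∫ x, (starRingEnd ℂ) ((w n : X → ℂ) x) * (g : X → ℂ) x ∂μ := by
      rw [innerSL_apply_apply, L2.inner_def]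
      exact integral_congr_ae (Filter.Eventually.of_forall fun x => by dsimp only; rw [RCLike.inner_apply]; ring)
    rw [h1]
    calc ‖∫ x, (starRingEnd ℂ) ((w n : X → ℂ) x) * (g : X → ℂ) x ∂μ‖
        ≤ ∫ x, ‖(starRingEnd ℂ) ((w n : X → ℂ) x) * (g : X → ℂ) x‖ ∂μ :=
          norm_integral_le_integral_norm _
      _ ≤ ∫ x, ‖(g : X → ℂ) x * k x‖ ∂μ := by
          apply integral_mono_of_nonneg (Filter.Eventually.of_forall fun x => norm_nonneg _)
            (hint g).norm
          filter_upwards [hwcoe n] with x hx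
          rw [hx]
          by_cases hmem : x ∈ E n
          · rw [Set.indicator_of_mem hmem]
            simp [norm_mul, mul_comm]
          · simp only [Set.indicator_of_notMem hmem, map_zero, zero_mul, norm_zero]
            positivity
    
  obtain ⟨C, hC⟩ := banach_steinhaus hpt
  have hwC : ∀ n, ‖w n‖ ≤ C := fun n => by rw [← innerSL_apply_norm (𝕜 := ℂ)]; exact hC n
  have hCnn : (0:ℝ) ≤ C := le_trans (norm_nonneg _) (hwC 0)
  have key : ∫⁻ x, (‖k x‖₊ : ℝ≥0∞) ^ 2 ∂μ ≤ (ENNReal.ofReal C) ^ 2 := by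
    have hmono : Monotone fun n => (E n).indicator fun x => (‖k x‖₊ : ℝ≥0∞) ^ 2 := by
      intro m n hmn
      exact Set.indicator_le_indicator_of_subset (hEmono hmn) (fun x => zero_le)
    have hsup : (fun x => (‖k x‖₊ : ℝ≥0∞) ^ 2) =
        fun x => ⨆ n, (E n).indicator (fun x => (‖k x‖₊ : ℝ≥0∞) ^ 2) x := by
      funext x
      refine le_antisymm ?_ (iSup_le fun n => Set.indicator_le_self' (fun _ _ => zero_le) x)
      have hxu : x ∈ ⋃ n, spanningSets μ n := by
        rw [iUnion_spanningSets μ]; trivial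
      obtain ⟨m, hm⟩ := Set.mem_iUnion.mp hxu
      obtain ⟨j, hj⟩ := exists_nat_ge ‖k x‖
      have hxE : x ∈ E (max m j) := by
        constructor
        · exact monotone_spanningSets μ (le_max_left m j) hm
        · exact le_trans hj (by exact_mod_cast Nat.cast_le.mpr (le_max_right m j))
      calc (‖k x‖₊ : ℝ≥0∞) ^ 2
          = (E (max m j)).indicator (fun x => (‖k x‖₊ : ℝ≥0∞) ^ 2) x := by
            rw [Set.indicator_of_mem hxE]
        _ ≤ ⨆ n, (E n).indicator (fun x => (‖k x‖₊ : ℝ≥0∞) ^ 2) x :=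
            le_iSup (fun n => (E n).indicator (fun x => (‖k x‖₊ : ℝ≥0∞) ^ 2) x) (max m j)
    rw [hsup, lintegral_iSup (fun n => ((hk.nnnorm.coe_nnreal_ennreal.pow_const 2).indicator
      (hEmeas n))) hmono]
    refine iSup_le fun n => ?_
    have h2 : ∫⁻ x, (E n).indicator (fun x => (‖k x‖₊ : ℝ≥0∞) ^ 2) x ∂μ
        = ∫⁻ x, (‖((E n).indicator fun x => star (k x)) x‖₊ : ℝ≥0∞) ^ 2 ∂μ := by
      apply lintegral_congr fun x => ?_
      by_cases hmem : x ∈ E n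
      · simp [Set.indicator_of_mem hmem]
      · simp [Set.indicator_of_notMem hmem]
    rw [h2, lintegral_nnnorm_sq_eq, ← eLpNorm_congr_ae (hwcoe n)]
    have h3 : eLpNorm (w n : X → ℂ) 2 μ = ENNReal.ofReal ‖w n‖ := by
      rw [Lp.norm_def, ENNReal.ofReal_toReal (Lp.eLpNorm_ne_top _)]
    rw [h3]
    exact pow_le_pow_left' (ENNReal.ofReal_le_ofReal (hwC n)) 2
  refine ⟨hk.aestronglyMeasurable, ?_⟩
  have : (eLpNorm k 2 μ) ^ 2 < ∞ := by
    rw [← lintegral_nnnorm_sq_eq]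
    exact lt_of_le_of_lt key (ENNReal.pow_lt_top ENNReal.ofReal_lt_top)
  by_contra hct
  rw [not_lt, top_le_iff] at hct
  rw [hct, pow_two, ENNReal.top_mul_top] at this
  exact lt_irrefl _ this


lemma exists_clm_of_memLp
    {H : Type*} [NormedAddCommGroup H] [InnerProductSpace ℂ H] [CompleteSpace H]
    {X : Type*} [MeasurableSpace X] {μ : Measure X}
    (f : X → H)
    (hall : ∀ h : H, MemLp (fun x => (inner ℂ (f x) h : ℂ)) 2 μ) :
    ∃ S : H →L[ℂ] Lp ℂ 2 μ,
      ∀ h : H, (S h : X → ℂ) =ᵐ[μ] fun x => (inner ℂ (f x) h : ℂ) := by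
  haveI : Fact ((1:ℝ≥0∞) ≤ 2) := ⟨one_le_two⟩
  let S₀ : H →ₗ[ℂ] Lp ℂ 2 μ :=
    { toFun := fun h => (hall h).toLp _
      map_add' := by
        intro a b
        apply Lp.ext
        filter_upwards [MemLp.coeFn_toLp (hall (a + b)), MemLp.coeFn_toLp (hall a),
          MemLp.coeFn_toLp (hall b),
          Lp.coeFn_add ((hall a).toLp _) ((hall b).toLp _)] with x h1 h2 h3 h4
        rw [h1, h4]
        simp only [Pi.add_apply]
        rw [h2, h3, inner_add_right]
      map_smul' := by
        intro c a
        apply Lp.ext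
        filter_upwards [MemLp.coeFn_toLp (hall (c • a)), MemLp.coeFn_toLp (hall a),
          Lp.coeFn_smul c ((hall a).toLp _)] with x h1 h2 h3
        rw [h1, RingHom.id_apply, h3]
        simp only [Pi.smul_apply]
        rw [h2, inner_smul_right]
        simp }
  have hS₀ : ∀ h : H, (S₀ h : X → ℂ) =ᵐ[μ] fun x => (inner ℂ (f x) h : ℂ) := fun h =>
    MemLp.coeFn_toLp (hall h)
  have hcont : Continuous S₀ := by
    apply S₀.continuous_of_seq_closed_graph
    intro u h w hu hw
    have h1 : TendstoInMeasure μ (fun n => (S₀ (u n) : X → ℂ)) atTop (w : X → ℂ) :=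
      tendstoInMeasure_of_tendsto_Lp hw
    obtain ⟨ns, hns, hae⟩ := h1.exists_seq_tendsto_ae
    have hco : ∀ᵐ x ∂μ, ∀ i : ℕ, (S₀ (u (ns i)) : X → ℂ) x = (inner ℂ (f x) (u (ns i)) : ℂ) := by
      rw [ae_all_iff]
      intro i
      exact hS₀ (u (ns i))
    have hkey : (w : X → ℂ) =ᵐ[μ] fun x => (inner ℂ (f x) h : ℂ) := by
      filter_upwards [hae, hco] with x hx1 hx2
      have t1 : Tendsto (fun i => (inner ℂ (f x) (u (ns i)) : ℂ)) atTop (𝓝 ((w : X → ℂ) x)) := by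
        apply hx1.congr
        intro i
        exact hx2 i
      have t2 : Tendsto (fun i => (inner ℂ (f x) (u (ns i)) : ℂ)) atTop
          (𝓝 (inner ℂ (f x) h : ℂ)) := by
        have : Tendsto (fun i => u (ns i)) atTop (𝓝 h) := hu.comp hns.tendsto_atTop
        exact ((continuous_inner.comp (Continuous.prodMk_right (f x))).tendsto h).comp this
      exact tendsto_nhds_unique t1 t2
    apply Lp.ext
    exact hkey.trans (hS₀ h).symm
  exact ⟨⟨S₀, hcont⟩, hS₀⟩


private lemma enn_lt_top_of_sq {a : ℝ≥0∞} (h : a ^ 2 < ⊤) : a < ⊤ := by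
  by_contra hct
  rw [not_lt, top_le_iff] at hct
  rw [hct, pow_two, ENNReal.top_mul_top] at h
  exact lt_irrefl _ h



/-- A weakly measurable `f : X → H` is a c-Bessel mapping for `H` iff
for every `g ∈ L²(X, μ)` the weak integral `∫_X g f dμ` exists in `H`, i.e. there is
`v ∈ H` with `⟨v, h⟩ = ∫ g x ⟨f x, h⟩ dμ` for all `h ∈ H` (existence including
integrability of the scalar integrands). -/
theorem cBessel_iff_weak_integral_exists
    {H : Type*} [NormedAddCommGroup H] [InnerProductSpace ℂ H] [CompleteSpace H]
    {X : Type*} [MeasurableSpace X] (μ : Measure X) [SigmaFinite μ]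
    (f : X → H)
    (hmeas : ∀ h : H, Measurable fun x => (inner ℂ h (f x) : ℂ)) :
    (∃ B : ℝ, ∀ h : H,
        ∫⁻ x, (‖(inner ℂ h (f x) : ℂ)‖₊ : ℝ≥0∞) ^ 2 ∂μ ≤ ENNReal.ofReal (B * ‖h‖ ^ 2)) ↔
      (∀ g : Lp ℂ 2 μ, ∃ v : H,
        (∀ h : H, Integrable (fun x => (g : X → ℂ) x * (inner ℂ (f x) h : ℂ)) μ) ∧
        (∀ h : H, (inner ℂ v h : ℂ) = ∫ x, (g : X → ℂ) x * (inner ℂ (f x) h : ℂ) ∂μ)) := by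
  haveI : Fact ((1:ℝ≥0∞) ≤ 2) := ⟨one_le_two⟩
  have hkm : ∀ h : H, Measurable fun x => (inner ℂ (f x) h : ℂ) := fun h => by
    have h0 : Measurable fun x => star ((inner ℂ h (f x) : ℂ)) :=
      continuous_star.measurable.comp (hmeas h)
    have h1 : (fun x => star ((inner ℂ h (f x) : ℂ))) = fun x => (inner ℂ (f x) h : ℂ) := by
      funext x
      rw [RCLike.star_def, inner_conj_symm]
    rwa [h1] at h0
  have hnn : ∀ (h : H) (x : X), (‖(inner ℂ h (f x) : ℂ)‖₊ : ℝ≥0∞) = ‖(inner ℂ (f x) h : ℂ)‖₊ := by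
    intro h x
    congr 1
    rw [← inner_conj_symm (𝕜 := ℂ) (f x) h]
    exact (RCLike.nnnorm_conj _).symm
  constructor
  · rintro ⟨B, hB⟩ g
    -- every inner function is in L²
    have hall : ∀ h : H, MemLp (fun x => (inner ℂ (f x) h : ℂ)) 2 μ := by
      intro h
      refine ⟨(hkm h).aestronglyMeasurable, ?_⟩
      apply enn_lt_top_of_sq
      rw [← lintegral_nnnorm_sq_eq]
      calc ∫⁻ x, (‖(inner ℂ (f x) h : ℂ)‖₊ : ℝ≥0∞) ^ 2 ∂μ
          = ∫⁻ x, (‖(inner ℂ h (f x) : ℂ)‖₊ : ℝ≥0∞) ^ 2 ∂μ := by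
            apply lintegral_congr fun x => by rw [hnn h x]
        _ ≤ ENNReal.ofReal (B * ‖h‖ ^ 2) := hB h
        _ < ⊤ := ENNReal.ofReal_lt_top
    obtain ⟨S, hS⟩ := exists_clm_of_memLp f hall
    -- the conjugate of g as an element of L²
    have hgs : MemLp (fun x => star ((g : X → ℂ) x)) 2 μ := by
      refine MemLp.of_le (Lp.memLp g)
        (continuous_star.comp_aestronglyMeasurable (Lp.aestronglyMeasurable g)) ?_
      exact Filter.Eventually.of_forall fun x => le_of_eq (norm_star _)
    set gs : Lp ℂ 2 μ := hgs.toLp _ with hgsdef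
    have hgscoe : (gs : X → ℂ) =ᵐ[μ] fun x => star ((g : X → ℂ) x) := MemLp.coeFn_toLp hgs
    have hint : ∀ h : H, Integrable (fun x => (g : X → ℂ) x * (inner ℂ (f x) h : ℂ)) μ := by
      intro h
      apply (L2.integrable_inner (𝕜 := ℂ) gs (S h)).congr
      filter_upwards [hgscoe, hS h] with x h1 h2
      rw [RCLike.inner_apply, h1, h2]
      simp
      ring
    refine ⟨(ContinuousLinearMap.adjoint S) gs, hint, fun h => ?_⟩
    rw [ContinuousLinearMap.adjoint_inner_left S h gs, L2.inner_def]
    apply integral_congr_ae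
    filter_upwards [hgscoe, hS h] with x h1 h2
    rw [RCLike.inner_apply, h1, h2]
    simp
    ring
  · intro hg
    have hall : ∀ h : H, MemLp (fun x => (inner ℂ (f x) h : ℂ)) 2 μ := by
      intro h
      exact memLp_two_of_integrable_mul (hkm h) fun g => (hg g).choose_spec.1 h
    obtain ⟨S, hS⟩ := exists_clm_of_memLp f hall
    refine ⟨‖S‖ ^ 2, fun h => ?_⟩
    have h1 : ∫⁻ x, (‖(inner ℂ h (f x) : ℂ)‖₊ : ℝ≥0∞) ^ 2 ∂μ
        = (eLpNorm (fun x => (inner ℂ (f x) h : ℂ)) 2 μ) ^ 2 := by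
      rw [← lintegral_nnnorm_sq_eq]
      exact lintegral_congr fun x => by rw [hnn h x]
    rw [h1, ← eLpNorm_congr_ae (hS h)]
    have h2 : eLpNorm (S h : X → ℂ) 2 μ = ENNReal.ofReal ‖S h‖ := by
      rw [Lp.norm_def, ENNReal.ofReal_toReal (Lp.eLpNorm_ne_top _)]
    rw [h2, ← ENNReal.ofReal_pow (norm_nonneg _)]
    apply ENNReal.ofReal_le_ofReal
    calc ‖S h‖ ^ 2 ≤ (‖S‖ * ‖h‖) ^ 2 :=
          pow_le_pow_left₀ (norm_nonneg _) (S.le_opNorm h) 2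
      _ = ‖S‖ ^ 2 * ‖h‖ ^ 2 := by ring
end

section
/- Let H and H₀ be complex Hilbert spaces, (X,μ) a σ-finite measure space, k : H₀ → H a bounded linear operator, and f : X → H weakly measurable. Suppose f is a family of local ck-atoms for H₀, i.e.: (i) for every g ∈ L²(X,μ) the weak integral ∫_X g f dμ exists in H, and (ii) there exist a > 0 and a map ℓ assigning to each x ∈ X a linear functional ℓ(x) : H₀ → ℂ such that for every h ∈ H₀ the function x ↦ ℓ(x)(h) belongs to L²(X,μ) with L²-norm at most a‖h‖, and k h = ∫_X ℓ(·)(h) f dμ (weak integral). Then f is a ck-frame for H with respect to H₀; in fact a⁻²‖k*(h)‖² ≤ ∫_X |⟨h, f(x)⟩|² dμ(x) for all h ∈ H, and f is a c-Bessel mapping for H. -/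
open MeasureTheory
open Filter Set
open scoped ENNReal NNReal Topology

theorem sq_eLpNorm_two {X : Type*} [MeasurableSpace X] (μ : Measure X) (f : X → ℂ) :
    (eLpNorm f 2 μ) ^ (2:ℕ) = ∫⁻ x, (‖f x‖₊ : ℝ≥0∞) ^ (2:ℕ) ∂μ := by
  rw [eLpNorm_eq_lintegral_rpow_enorm_toReal two_ne_zero ENNReal.ofNat_ne_top]
  simp only [ENNReal.toReal_ofNat]
  rw [← ENNReal.rpow_natCast _ 2, ← ENNReal.rpow_mul]
  norm_num
  simp only [enorm_eq_nnnorm]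

theorem memL2_of_mul_integrable {X : Type*} [MeasurableSpace X] {μ : Measure X}
    [SigmaFinite μ] {φ : X → ℂ} (mφ : Measurable φ)
    (hint : ∀ g : Lp ℂ 2 μ, Integrable (fun x => (g : X → ℂ) x * φ x) μ) :
    MemLp φ 2 μ := by
  classical
  have mem1 : ∀ g : Lp ℂ 2 μ, MemLp (fun x => (g : X → ℂ) x * φ x) 1 μ :=
    fun g => memLp_one_iff_integrable.2 (hint g)
  let S : Lp ℂ 2 μ →ₗ[ℂ] Lp ℂ 1 μ :=
    { toFun := fun g => (mem1 g).toLp _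
      map_add' := by
        intro g₁ g₂
        rw [← MemLp.toLp_add (mem1 g₁) (mem1 g₂)]
        refine MemLp.toLp_congr _ _ ?_
        filter_upwards [Lp.coeFn_add g₁ g₂] with x hx
        rw [hx]; simp [add_mul]
      map_smul' := by
        intro c g
        rw [RingHom.id_apply]
        show (mem1 (c • g)).toLp _ = c • (mem1 g).toLp _
        rw [← MemLp.toLp_const_smul c (mem1 g)]
        exact MemLp.toLp_congr (mem1 (c • g)) ((mem1 g).const_smul c) (by
          filter_upwards [Lp.coeFn_smul c g] with x hx
          rw [hx]; simp [smul_eq_mul, mul_assoc]) }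
  have hScoe : ∀ g : Lp ℂ 2 μ, ⇑(S g) =ᵐ[μ] fun x => (g : X → ℂ) x * φ x :=
    fun g => (mem1 g).coeFn_toLp
  have hScont : Continuous S := by
    apply S.continuous_of_seq_closed_graph
    intro u x y hux hSy
    have h2 : Tendsto (fun n => eLpNorm (⇑(u n) - ⇑x) 2 μ) atTop (𝓝 0) :=
      (Lp.tendsto_Lp_iff_tendsto_eLpNorm' u x).mp hux
    have hm1 : TendstoInMeasure μ (fun n => ⇑(u n)) atTop ⇑x :=
      tendstoInMeasure_of_tendsto_eLpNorm two_ne_zero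
        (fun n => Lp.aestronglyMeasurable _) (Lp.aestronglyMeasurable _) h2
    obtain ⟨ns, hns, hae1⟩ := hm1.exists_seq_tendsto_ae
    have hSy' : Tendsto (fun i => S (u (ns i))) atTop (𝓝 y) := by
      exact hSy.comp hns.tendsto_atTop
    have h2' : Tendsto (fun i => eLpNorm (⇑(S (u (ns i))) - ⇑y) 1 μ) atTop (𝓝 0) :=
      (Lp.tendsto_Lp_iff_tendsto_eLpNorm' _ y).mp hSy'
    have hm2 : TendstoInMeasure μ (fun i => ⇑(S (u (ns i)))) atTop ⇑y :=
      tendstoInMeasure_of_tendsto_eLpNorm one_ne_zero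
        (fun n => Lp.aestronglyMeasurable _) (Lp.aestronglyMeasurable _) h2'
    obtain ⟨ms, hms, hae2⟩ := hm2.exists_seq_tendsto_ae
    have hcoe : ∀ᵐ pt ∂μ, ∀ i : ℕ,
        (S (u (ns (ms i)))) pt = (u (ns (ms i)) : X → ℂ) pt * φ pt := by
      rw [ae_all_iff]; intro i; exact hScoe _
    refine Lp.ext ?_
    filter_upwards [hae1, hae2, hcoe, hScoe x] with pt h1 hy2 h3 h4
    have h1' : Tendsto (fun i => (u (ns (ms i)) : X → ℂ) pt) atTop (𝓝 ((x : X → ℂ) pt)) :=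
      h1.comp hms.tendsto_atTop
    have hmul : Tendsto (fun i => (u (ns (ms i)) : X → ℂ) pt * φ pt) atTop
        (𝓝 ((x : X → ℂ) pt * φ pt)) := h1'.mul tendsto_const_nhds
    have hlim : Tendsto (fun i => (S (u (ns (ms i)))) pt) atTop
        (𝓝 ((x : X → ℂ) pt * φ pt)) := by
      refine hmul.congr fun i => (h3 i).symm
    rw [h4, ← tendsto_nhds_unique hy2 hlim]
  let S' : Lp ℂ 2 μ →L[ℂ] Lp ℂ 1 μ := ⟨S, hScont⟩
  set C := ‖S'‖ with hC
  have hC0 : (0:ℝ) ≤ C := norm_nonneg _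
  -- truncations
  set s : ℕ → Set X := fun n => spanningSets μ n ∩ {x | ‖φ x‖ ≤ n} with hsdef
  have hsm : ∀ n, MeasurableSet (s n) := fun n =>
    (measurableSet_spanningSets μ n).inter (measurableSet_le mφ.norm measurable_const)
  set g : ℕ → X → ℂ := fun n => (s n).indicator (fun x => star (φ x)) with hgdef
  have hgmeas : ∀ n, Measurable (g n) := fun n => (continuous_star.measurable.comp mφ).indicator (hsm n)
  have hgmem : ∀ n, MemLp (g n) 2 μ := by
    intro n
    refine ⟨(hgmeas n).aestronglyMeasurable, ?_⟩
    calc eLpNorm (g n) 2 μ ≤ eLpNorm ((s n).indicator (fun _ => (n:ℝ))) 2 μ := by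
          apply eLpNorm_mono
          intro x
          by_cases hx : x ∈ s n
          · simp only [hgdef, Set.indicator_of_mem hx, norm_star]
            exact hx.2.trans (le_abs_self _)
          · simp [hgdef, Set.indicator_of_notMem hx]
      _ < ⊤ := by
          rw [eLpNorm_indicator_const (hsm n) two_ne_zero ENNReal.ofNat_ne_top]
          refine ENNReal.mul_lt_top (by simp) ?_
          refine ENNReal.rpow_lt_top_of_nonneg (by positivity) ?_
          exact ((measure_mono Set.inter_subset_left).trans_lt
            (measure_spanningSets_lt_top μ n)).ne
  -- key pointwise identities
  have hgsq : ∀ n x, (‖g n x‖₊ : ℝ≥0∞) ^ (2:ℕ) =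
      (s n).indicator (fun x => (‖φ x‖₊ : ℝ≥0∞) ^ (2:ℕ)) x := by
    intro n x
    by_cases hx : x ∈ s n <;> simp [hgdef, Set.indicator_of_mem, Set.indicator_of_notMem, hx]
  have hgφ : ∀ n x, (‖g n x * φ x‖₊ : ℝ≥0∞) =
      (s n).indicator (fun x => (‖φ x‖₊ : ℝ≥0∞) ^ (2:ℕ)) x := by
    intro n x
    by_cases hx : x ∈ s n
    · simp [hgdef, Set.indicator_of_mem hx, nnnorm_mul, sq, ENNReal.coe_mul]
    · simp [hgdef, Set.indicator_of_notMem hx]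
  set I : ℕ → ℝ≥0∞ := fun n =>
    ∫⁻ x, (s n).indicator (fun x => (‖φ x‖₊ : ℝ≥0∞) ^ (2:ℕ)) x ∂μ with hI
  have hIg : ∀ n, (eLpNorm (g n) 2 μ) ^ (2:ℕ) = I n := by
    intro n; rw [sq_eLpNorm_two]; exact lintegral_congr fun x => hgsq n x
  have hIfin : ∀ n, I n ≠ ⊤ := by
    intro n
    rw [← hIg n]
    exact (ENNReal.pow_lt_top (hgmem n).2).ne
  -- the norm inequality
  have hIle : ∀ n, I n ≤ ENNReal.ofReal (C ^ 2) := by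
    intro n
    set G : Lp ℂ 2 μ := (hgmem n).toLp (g n) with hG
    have hnormG : ‖G‖ = (eLpNorm (g n) 2 μ).toReal := Lp.norm_toLp _ _
    have hSG : ‖S' G‖ = (I n).toReal := by
      have h1 : ‖S' G‖ = (eLpNorm (fun x => (G : X → ℂ) x * φ x) 1 μ).toReal :=
        Lp.norm_toLp _ (mem1 G)
      have h2 : eLpNorm (fun x => (G : X → ℂ) x * φ x) 1 μ = I n := by
        have hcongr : eLpNorm (fun x => (G : X → ℂ) x * φ x) 1 μ
            = eLpNorm (fun x => g n x * φ x) 1 μ := by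
          refine eLpNorm_congr_ae ?_
          filter_upwards [(hgmem n).coeFn_toLp] with x hx
          rw [hx]
        rw [hcongr, eLpNorm_one_eq_lintegral_enorm]
        exact lintegral_congr fun x => hgφ n x
      rw [h1, h2]
    have hineq : ‖S' G‖ ≤ C * ‖G‖ := S'.le_opNorm G
    rw [hSG, hnormG] at hineq
    have ht0 : (0:ℝ) ≤ (eLpNorm (g n) 2 μ).toReal := ENNReal.toReal_nonneg
    have htsq : (eLpNorm (g n) 2 μ).toReal ^ 2 = (I n).toReal := by
      rw [← ENNReal.toReal_pow, hIg n]
    have : (I n).toReal ≤ C ^ 2 := by nlinarith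
    exact (ENNReal.le_ofReal_iff_toReal_le (hIfin n) (by positivity)).mpr this
  -- monotone convergence
  have hmono : Monotone (fun n => (s n).indicator (fun x => (‖φ x‖₊ : ℝ≥0∞) ^ (2:ℕ))) := by
    apply monotone_nat_of_le_succ
    intro n
    refine Set.indicator_le_indicator_of_subset ?_ (fun x => zero_le)
    refine Set.inter_subset_inter (monotone_spanningSets μ (Nat.le_succ n)) ?_
    intro x hx
    simp only [Set.mem_setOf_eq] at hx ⊢
    exact hx.trans (by exact_mod_cast Nat.le_succ n)
  have hsup : ∀ x, ⨆ n, (s n).indicator (fun x => (‖φ x‖₊ : ℝ≥0∞) ^ (2:ℕ)) x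
      = (‖φ x‖₊ : ℝ≥0∞) ^ (2:ℕ) := by
    intro x
    refine le_antisymm (iSup_le fun n => ?_) ?_
    · by_cases hx : x ∈ s n
      · rw [Set.indicator_of_mem hx]
      · rw [Set.indicator_of_notMem hx]; exact zero_le
    · obtain ⟨n₁, hn₁⟩ : ∃ n, x ∈ spanningSets μ n := by
        have := iUnion_spanningSets μ
        have hx : x ∈ ⋃ i, spanningSets μ i := by rw [this]; trivial
        exact Set.mem_iUnion.mp hx
      obtain ⟨n₂, hn₂⟩ := exists_nat_ge ‖φ x‖
      refine le_iSup_of_le (max n₁ n₂) ?_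
      have hxmem : x ∈ s (max n₁ n₂) := by
        constructor
        · exact monotone_spanningSets μ (le_max_left _ _) hn₁
        · refine hn₂.trans ?_
          exact_mod_cast Nat.le_max_right n₁ n₂
      rw [Set.indicator_of_mem hxmem]
  have key : ∫⁻ x, (‖φ x‖₊ : ℝ≥0∞) ^ (2:ℕ) ∂μ ≤ ENNReal.ofReal (C ^ 2) := by
    have hlint := lintegral_iSup (μ := μ)
      (f := fun n => (s n).indicator (fun x => (‖φ x‖₊ : ℝ≥0∞) ^ (2:ℕ)))
      (fun n => (mφ.enorm.pow_const 2).indicator (hsm n)) hmono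
    have : ∫⁻ x, (‖φ x‖₊ : ℝ≥0∞) ^ (2:ℕ) ∂μ = ⨆ n, I n := by
      rw [← hlint]
      exact lintegral_congr fun x => (hsup x).symm
    rw [this]
    exact iSup_le hIle
  refine ⟨mφ.aestronglyMeasurable, ?_⟩
  have : (eLpNorm φ 2 μ) ^ (2:ℕ) < ⊤ := by
    rw [sq_eLpNorm_two]
    exact key.trans_lt ENNReal.ofReal_lt_top
  by_contra h
  rw [not_lt, top_le_iff] at h
  rw [h, ENNReal.top_pow (by norm_num)] at this
  exact lt_irrefl _ this


/-- If `f : X → H` is a family of local ck-atoms for `H₀` (i.e. all weak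
integrals `∫ g f dμ`, `g ∈ L²`, exist, and there are `a > 0` and linear functionals
`ℓ x : H₀ → ℂ` with `ℓ(·)(h₀) ∈ L²`, `‖ℓ(·)(h₀)‖₂ ≤ a ‖h₀‖` and
`k h₀ = ∫ ℓ(·)(h₀) f dμ` weakly), then `f` is a ck-frame for `H` with respect to `H₀`:
`f` is a c-Bessel mapping (with a positive bound) and
`a⁻² ‖k* h‖² ≤ ∫ |⟨h, f x⟩|² dμ` for all `h ∈ H`. -/
theorem ckFrame_of_local_ck_atoms
    {H : Type*} [NormedAddCommGroup H] [InnerProductSpace ℂ H] [CompleteSpace H]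
    {H₀ : Type*} [NormedAddCommGroup H₀] [InnerProductSpace ℂ H₀] [CompleteSpace H₀]
    {X : Type*} [MeasurableSpace X] (μ : Measure X) [SigmaFinite μ]
    (k : H₀ →L[ℂ] H) (f : X → H)
    (hmeas : ∀ h : H, Measurable fun x => (inner ℂ h (f x) : ℂ))
    (hweakint : ∀ g : Lp ℂ 2 μ, ∃ v : H,
      (∀ h : H, Integrable (fun x => (g : X → ℂ) x * (inner ℂ (f x) h : ℂ)) μ) ∧
      (∀ h : H, (inner ℂ v h : ℂ) = ∫ x, (g : X → ℂ) x * (inner ℂ (f x) h : ℂ) ∂μ))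
    (a : ℝ) (ha : 0 < a) (ℓ : X → H₀ →ₗ[ℂ] ℂ)
    (hℓL2 : ∀ h₀ : H₀, MemLp (fun x => ℓ x h₀) 2 μ)
    (hℓbound : ∀ h₀ : H₀, eLpNorm (fun x => ℓ x h₀) 2 μ ≤ ENNReal.ofReal (a * ‖h₀‖))
    (hatom : ∀ (h₀ : H₀) (h : H),
      (inner ℂ (k h₀) h : ℂ) = ∫ x, ℓ x h₀ * (inner ℂ (f x) h : ℂ) ∂μ) :
    (∃ B : ℝ, 0 < B ∧ ∀ h : H,
        ∫⁻ x, (‖(inner ℂ h (f x) : ℂ)‖₊ : ℝ≥0∞) ^ 2 ∂μ ≤ ENNReal.ofReal (B * ‖h‖ ^ 2)) ∧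
    (∀ h : H,
        ENNReal.ofReal (a⁻¹ ^ 2 * ‖(ContinuousLinearMap.adjoint k) h‖ ^ 2) ≤
          ∫⁻ x, (‖(inner ℂ h (f x) : ℂ)‖₊ : ℝ≥0∞) ^ 2 ∂μ) := by
  have mφ : ∀ h : H, Measurable fun x => (inner ℂ (f x) h : ℂ) := by
    intro h
    have heq : (fun x => (inner ℂ (f x) h : ℂ)) = fun x => star (inner ℂ h (f x) : ℂ) := by
      funext x; rw [← inner_conj_symm]; rfl
    rw [heq]
    exact continuous_star.measurable.comp (hmeas h)
  have memA : ∀ h : H, MemLp (fun x => (inner ℂ (f x) h : ℂ)) 2 μ := fun h =>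
    memL2_of_mul_integrable (mφ h) (fun g => (hweakint g).choose_spec.1 h)
  -- the analysis operator
  let T : H →ₗ[ℂ] Lp ℂ 2 μ :=
    { toFun := fun h => (memA h).toLp _
      map_add' := by
        intro h₁ h₂
        rw [← MemLp.toLp_add (memA h₁) (memA h₂)]
        exact MemLp.toLp_congr (memA (h₁ + h₂)) ((memA h₁).add (memA h₂))
          (ae_of_all _ fun x => by simp [inner_add_right])
      map_smul' := by
        intro c h
        rw [RingHom.id_apply]
        show (memA (c • h)).toLp _ = c • (memA h).toLp _
        rw [← MemLp.toLp_const_smul c (memA h)]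
        exact MemLp.toLp_congr (memA (c • h)) ((memA h).const_smul c)
          (ae_of_all _ fun x => by simp [inner_smul_right, smul_eq_mul]) }
  have hTcoe : ∀ h : H, ⇑(T h) =ᵐ[μ] fun x => (inner ℂ (f x) h : ℂ) :=
    fun h => (memA h).coeFn_toLp
  have hTcont : Continuous T := by
    apply T.continuous_of_seq_closed_graph
    intro u x y hux hTy
    have h2' : Tendsto (fun i => eLpNorm (⇑(T (u i)) - ⇑y) 2 μ) atTop (𝓝 0) :=
      (Lp.tendsto_Lp_iff_tendsto_eLpNorm' _ y).mp hTy
    have hm2 : TendstoInMeasure μ (fun i => ⇑(T (u i))) atTop ⇑y :=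
      tendstoInMeasure_of_tendsto_eLpNorm two_ne_zero
        (fun n => Lp.aestronglyMeasurable _) (Lp.aestronglyMeasurable _) h2'
    obtain ⟨ns, hns, hae⟩ := hm2.exists_seq_tendsto_ae
    have hcoe : ∀ᵐ pt ∂μ, ∀ i : ℕ, (T (u (ns i))) pt = (inner ℂ (f pt) (u (ns i)) : ℂ) := by
      rw [ae_all_iff]; intro i; exact hTcoe _
    refine Lp.ext ?_
    filter_upwards [hae, hcoe, hTcoe x] with pt h1 h2 h3
    have hlim : Tendsto (fun i => (inner ℂ (f pt) (u (ns i)) : ℂ)) atTop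
        (𝓝 (inner ℂ (f pt) x)) :=
      Tendsto.inner tendsto_const_nhds (hux.comp hns.tendsto_atTop)
    have hlim' : Tendsto (fun i => (T (u (ns i))) pt) atTop (𝓝 (inner ℂ (f pt) x : ℂ)) :=
      hlim.congr fun i => (h2 i).symm
    rw [h3, ← tendsto_nhds_unique h1 hlim']
  let T' : H →L[ℂ] Lp ℂ 2 μ := ⟨T, hTcont⟩
  have hTnorm : ∀ h : H,
      eLpNorm (fun x => (inner ℂ (f x) h : ℂ)) 2 μ = ENNReal.ofReal ‖T' h‖ := by
    intro h
    have h1 : ‖T' h‖ = (eLpNorm (fun x => (inner ℂ (f x) h : ℂ)) 2 μ).toReal :=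
      Lp.norm_toLp _ (memA h)
    rw [h1, ENNReal.ofReal_toReal (memA h).2.ne]
  have hlin : ∀ h : H, ∫⁻ x, (‖(inner ℂ h (f x) : ℂ)‖₊ : ℝ≥0∞) ^ 2 ∂μ
      = ENNReal.ofReal ‖T' h‖ ^ 2 := by
    intro h
    have hnn : ∀ x : X, (‖(inner ℂ h (f x) : ℂ)‖₊) = ‖(inner ℂ (f x) h : ℂ)‖₊ := fun x =>
      NNReal.coe_injective (by simpa using norm_inner_symm (𝕜 := ℂ) h (f x))
    calc ∫⁻ x, (‖(inner ℂ h (f x) : ℂ)‖₊ : ℝ≥0∞) ^ 2 ∂μ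
        = ∫⁻ x, (‖(inner ℂ (f x) h : ℂ)‖₊ : ℝ≥0∞) ^ 2 ∂μ :=
          lintegral_congr fun x => by rw [hnn x]
      _ = eLpNorm (fun x => (inner ℂ (f x) h : ℂ)) 2 μ ^ 2 :=
          (sq_eLpNorm_two μ _).symm
      _ = ENNReal.ofReal ‖T' h‖ ^ 2 := by rw [hTnorm h]
  constructor
  · refine ⟨‖T'‖ ^ 2 + 1, by positivity, fun h => ?_⟩
    rw [hlin h, ← ENNReal.ofReal_pow (norm_nonneg _)]
    apply ENNReal.ofReal_le_ofReal
    have h1 : ‖T' h‖ ≤ ‖T'‖ * ‖h‖ := T'.le_opNorm h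
    nlinarith [norm_nonneg (T' h), norm_nonneg h, norm_nonneg T', sq_nonneg ‖h‖]
  · intro h
    set h₀ := ContinuousLinearMap.adjoint k h with hh₀
    have memu : MemLp (fun x => star (ℓ x h₀)) 2 μ := by
      refine ⟨continuous_star.comp_aestronglyMeasurable (hℓL2 h₀).1, ?_⟩
      rw [eLpNorm_congr_norm_ae (ae_of_all _ fun x => norm_star _)]
      exact (hℓL2 h₀).2
    set w : Lp ℂ 2 μ := memu.toLp _ with hw
    have hinner : (inner ℂ w (T' h) : ℂ) = (inner ℂ (k h₀) h : ℂ) := by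
      rw [hatom h₀ h, L2.inner_def]
      refine integral_congr_ae ?_
      have hT'coe : ⇑(T' h) =ᵐ[μ] fun x => (inner ℂ (f x) h : ℂ) := hTcoe h
      filter_upwards [memu.coeFn_toLp, hT'coe] with x h1 h2
      rw [RCLike.inner_apply, h1, h2]
      simp
      ring
    have hkk : (inner ℂ (k h₀) h : ℂ) = (‖h₀‖ : ℂ) ^ 2 := by
      rw [← ContinuousLinearMap.adjoint_inner_right k h₀ h, ← hh₀,
        inner_self_eq_norm_sq_to_K]
      norm_cast
    have hnormw : ‖w‖ ≤ a * ‖h₀‖ := by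
      have h1 : ‖w‖ = (eLpNorm (fun x => star (ℓ x h₀)) 2 μ).toReal :=
        Lp.norm_toLp _ memu
      rw [h1]
      have h2 : eLpNorm (fun x => star (ℓ x h₀)) 2 μ ≤ ENNReal.ofReal (a * ‖h₀‖) := by
        rw [eLpNorm_congr_norm_ae (ae_of_all _ fun x => norm_star _)]
        exact hℓbound h₀
      exact ENNReal.toReal_le_of_le_ofReal (by positivity) h2
    have hTh : ‖h₀‖ ^ 2 ≤ a * ‖h₀‖ * ‖T' h‖ := by
      have h1 : ‖(inner ℂ w (T' h) : ℂ)‖ ≤ ‖w‖ * ‖T' h‖ := norm_inner_le_norm _ _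
      rw [hinner, hkk] at h1
      have h2 : ‖((‖h₀‖ : ℂ)) ^ 2‖ = ‖h₀‖ ^ 2 := by
        rw [norm_pow]; simp
      rw [h2] at h1
      calc ‖h₀‖ ^ 2 ≤ ‖w‖ * ‖T' h‖ := h1
        _ ≤ a * ‖h₀‖ * ‖T' h‖ := mul_le_mul_of_nonneg_right hnormw (norm_nonneg _)
    have hsq : ‖h₀‖ ^ 2 ≤ a ^ 2 * ‖T' h‖ ^ 2 := by
      rcases eq_or_lt_of_le (norm_nonneg h₀) with h0 | h0
      · nlinarith [sq_nonneg (a * ‖T' h‖)]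
      · have h3 : ‖h₀‖ ≤ a * ‖T' h‖ := by nlinarith
        nlinarith [norm_nonneg (T' h), mul_nonneg ha.le (norm_nonneg (T' h))]
    have hfinal : a⁻¹ ^ 2 * ‖h₀‖ ^ 2 ≤ ‖T' h‖ ^ 2 := by
      have h4 : a⁻¹ ^ 2 * ‖h₀‖ ^ 2 ≤ a⁻¹ ^ 2 * (a ^ 2 * ‖T' h‖ ^ 2) :=
        mul_le_mul_of_nonneg_left hsq (by positivity)
      have h5 : a⁻¹ ^ 2 * (a ^ 2 * ‖T' h‖ ^ 2) = ‖T' h‖ ^ 2 := by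
        field_simp
      linarith
    rw [hlin h, ← ENNReal.ofReal_pow (norm_nonneg _)]
    exact ENNReal.ofReal_le_ofReal hfinal
end

section
/- Let H and H₀ be complex Hilbert spaces, (X,μ) a σ-finite measure space, k : H₀ → H a bounded linear operator, and f : X → H a c-Bessel mapping for H. Suppose there exists a bounded linear operator M : H₀ → L²(X,μ) such that ⟨k h₀, h⟩ = ∫_X (M h₀)(x) ⟨f(x), h⟩ dμ(x) for all h₀ ∈ H₀ and h ∈ H. Then f is a ck-frame for H with respect to H₀, i.e., there exists A > 0 such that A‖k*(h)‖² ≤ ∫_X |⟨h, f(x)⟩|² dμ(x) for all h ∈ H. -/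
open MeasureTheory
open scoped ENNReal

/-- If `f : X → H` is a c-Bessel mapping (bound `B`) and there exists a
bounded operator `M : H₀ → L²(X,μ)` with `⟨k h₀, h⟩ = ∫ (M h₀)(x) ⟨f x, h⟩ dμ` for all
`h₀ ∈ H₀`, `h ∈ H`, then `f` is a ck-frame for `H` with respect to `H₀`: there is
`A > 0` with `A ‖k* h‖² ≤ ∫ |⟨h, f x⟩|² dμ` for all `h ∈ H`. -/
theorem ckFrame_of_analysis_factorization
    {H : Type*} [NormedAddCommGroup H] [InnerProductSpace ℂ H] [CompleteSpace H]
    {H₀ : Type*} [NormedAddCommGroup H₀] [InnerProductSpace ℂ H₀] [CompleteSpace H₀]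
    {X : Type*} [MeasurableSpace X] (μ : Measure X) [SigmaFinite μ]
    (k : H₀ →L[ℂ] H) (f : X → H)
    (hmeas : ∀ h : H, Measurable fun x => (inner ℂ h (f x) : ℂ))
    (B : ℝ)
    (hBessel : ∀ h : H,
      ∫⁻ x, (‖(inner ℂ h (f x) : ℂ)‖₊ : ℝ≥0∞) ^ 2 ∂μ ≤ ENNReal.ofReal (B * ‖h‖ ^ 2))
    (M : H₀ →L[ℂ] Lp ℂ 2 μ)
    (hM : ∀ (h₀ : H₀) (h : H),
      (inner ℂ (k h₀) h : ℂ) = ∫ x, (M h₀ : X → ℂ) x * (inner ℂ (f x) h : ℂ) ∂μ) :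
    ∃ A : ℝ, 0 < A ∧ ∀ h : H,
      ENNReal.ofReal (A * ‖(ContinuousLinearMap.adjoint k) h‖ ^ 2) ≤
        ∫⁻ x, (‖(inner ℂ h (f x) : ℂ)‖₊ : ℝ≥0∞) ^ 2 ∂μ := by
  refine ⟨((‖M‖ + 1) ^ 2)⁻¹, by positivity, fun h => ?_⟩
  set w : X → ℂ := fun x => inner ℂ h (f x) with hw
  set S : ℝ≥0∞ := ∫⁻ x, (‖w x‖₊ : ℝ≥0∞) ^ 2 ∂μ with hS
  have hfin : S < ⊤ := lt_of_le_of_lt (hBessel h) ENNReal.ofReal_lt_top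
  have heLp : eLpNorm w 2 μ = S ^ (1/2 : ℝ) := by
    rw [eLpNorm_eq_lintegral_rpow_enorm_toReal (by norm_num) (by norm_num)]
    rw [show ((2:ℝ≥0∞)).toReal = 2 by norm_num, hS]
    congr 1
    refine lintegral_congr fun x => ?_
    rw [← ENNReal.rpow_natCast]
    norm_num
    rw [enorm_eq_nnnorm]
  have hwm : MemLp w 2 μ := by
    refine ⟨(hmeas h).aestronglyMeasurable, ?_⟩
    rw [heLp]
    exact ENNReal.rpow_lt_top_of_nonneg (by norm_num) hfin.ne
  set φ := hwm.toLp w with hφ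
  have hφnorm : ‖φ‖ = (S ^ (1/2 : ℝ)).toReal := by
    rw [hφ, Lp.norm_toLp, heLp]
  set h₀ := (ContinuousLinearMap.adjoint k) h with hh₀
  have key : (‖h₀‖ : ℝ) ^ 2 ≤ ‖M‖ * ‖h₀‖ * ‖φ‖ := by
    have h1 : (inner ℂ (k h₀) h : ℂ) = inner ℂ φ (M h₀) := by
      rw [hM h₀ h, MeasureTheory.L2.inner_def]
      refine integral_congr_ae ?_
      filter_upwards [hwm.coeFn_toLp] with x hx
      rw [RCLike.inner_apply, hx]
      congr 1
      exact (inner_conj_symm (f x) h).symm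
    have h2 : (inner ℂ (k h₀) h : ℂ) = inner ℂ h₀ h₀ := by
      rw [← ContinuousLinearMap.adjoint_inner_right, hh₀]
    have h3 : ‖(inner ℂ h₀ h₀ : ℂ)‖ = ‖h₀‖ ^ 2 := by
      rw [inner_self_eq_norm_sq_to_K]
      simp [← Complex.ofReal_pow]
    calc (‖h₀‖ : ℝ) ^ 2 = ‖(inner ℂ φ (M h₀) : ℂ)‖ := by rw [← h1, h2, h3]
      _ ≤ ‖φ‖ * ‖M h₀‖ := norm_inner_le_norm _ _
      _ ≤ ‖φ‖ * (‖M‖ * ‖h₀‖) := by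
          exact mul_le_mul_of_nonneg_left (M.le_opNorm h₀) (norm_nonneg _)
      _ = ‖M‖ * ‖h₀‖ * ‖φ‖ := by ring
  have hnorm : ‖h₀‖ ≤ ‖M‖ * ‖φ‖ := by
    rcases eq_or_lt_of_le (norm_nonneg h₀) with h0 | h0
    · rw [← h0]; positivity
    · have := key
      rw [sq] at this
      nlinarith
  have hfinal : ((‖M‖ + 1) ^ 2)⁻¹ * ‖h₀‖ ^ 2 ≤ ‖φ‖ ^ 2 := by
    have h1 : ‖h₀‖ ^ 2 ≤ ‖M‖ ^ 2 * ‖φ‖ ^ 2 := by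
      calc ‖h₀‖ ^ 2 ≤ (‖M‖ * ‖φ‖) ^ 2 := by
            exact pow_le_pow_left₀ (norm_nonneg _) hnorm 2
        _ = ‖M‖ ^ 2 * ‖φ‖ ^ 2 := by ring
    have h2 : ‖M‖ ^ 2 ≤ (‖M‖ + 1) ^ 2 := by nlinarith [norm_nonneg M]
    have h3 : (0:ℝ) < (‖M‖ + 1) ^ 2 := by positivity
    rw [inv_mul_le_iff₀ h3]
    nlinarith [sq_nonneg ‖φ‖]
  calc ENNReal.ofReal (((‖M‖ + 1) ^ 2)⁻¹ * ‖h₀‖ ^ 2)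
      ≤ ENNReal.ofReal (‖φ‖ ^ 2) := ENNReal.ofReal_le_ofReal hfinal
    _ ≤ S := by
        have hne : S ^ (1/2:ℝ) ≠ ⊤ :=
          (ENNReal.rpow_lt_top_of_nonneg (by norm_num) hfin.ne).ne
        rw [hφnorm, ENNReal.ofReal_pow ENNReal.toReal_nonneg, ENNReal.ofReal_toReal hne,
          ← ENNReal.rpow_natCast, ← ENNReal.rpow_mul]
        norm_num
end

section
/- Let H and H₀ be complex Hilbert spaces, (X,μ) a σ-finite measure space, k : H₀ → H a bounded linear operator with closed range, and f : X → H a ck-frame for H with respect to H₀ with bounds A, B. Then there exists a constant c > 0 such that for every h in the range of k, c‖h‖² ≤ ∫_X |⟨h, f(x)⟩|² dμ(x) ≤ B‖h‖². In particular, the restriction of the frame quadratic form to the range of k is bounded below and above, so the frame operator S_f is invertible on the range of k. -/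
open MeasureTheory
open scoped ENNReal

/-- If `k : H₀ → H` has closed range and `f : X → H` is a ck-frame for `H`
with respect to `H₀` with bounds `A, B`, then there is `c > 0` such that
`c ‖h‖² ≤ ∫ |⟨h, f x⟩|² dμ ≤ B ‖h‖²` for every `h ∈ R(k)`. -/
theorem frame_bounds_on_range_of_closed_range
    {H : Type*} [NormedAddCommGroup H] [InnerProductSpace ℂ H] [CompleteSpace H]
    {H₀ : Type*} [NormedAddCommGroup H₀] [InnerProductSpace ℂ H₀] [CompleteSpace H₀]
    {X : Type*} [MeasurableSpace X] (μ : Measure X) [SigmaFinite μ]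
    (k : H₀ →L[ℂ] H) (hclosed : IsClosed (Set.range k))
    (f : X → H)
    (hmeas : ∀ h : H, Measurable fun x => (inner ℂ h (f x) : ℂ))
    (A B : ℝ) (hA : 0 < A) (hB : 0 < B)
    (hlow : ∀ h : H,
      ENNReal.ofReal (A * ‖(ContinuousLinearMap.adjoint k) h‖ ^ 2) ≤
        ∫⁻ x, (‖(inner ℂ h (f x) : ℂ)‖₊ : ℝ≥0∞) ^ 2 ∂μ)
    (hup : ∀ h : H,
      ∫⁻ x, (‖(inner ℂ h (f x) : ℂ)‖₊ : ℝ≥0∞) ^ 2 ∂μ ≤ ENNReal.ofReal (B * ‖h‖ ^ 2)) :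
    ∃ c : ℝ, 0 < c ∧ ∀ h ∈ Set.range k,
      ENNReal.ofReal (c * ‖h‖ ^ 2) ≤ ∫⁻ x, (‖(inner ℂ h (f x) : ℂ)‖₊ : ℝ≥0∞) ^ 2 ∂μ ∧
      ∫⁻ x, (‖(inner ℂ h (f x) : ℂ)‖₊ : ℝ≥0∞) ^ 2 ∂μ ≤ ENNReal.ofReal (B * ‖h‖ ^ 2) := by
  -- The range as a submodule; it is complete since it is closed.
  set p : Submodule ℂ H := LinearMap.range (k : H₀ →ₗ[ℂ] H) with hp
  have hpclosed : IsClosed (p : Set H) := by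
    simpa [hp, LinearMap.coe_range] using hclosed
  haveI : CompleteSpace p := hpclosed.completeSpace_coe
  -- corestriction of k onto its range is surjective
  let k' : H₀ →L[ℂ] p := k.codRestrict p (fun x => LinearMap.mem_range_self (k : H₀ →ₗ[ℂ] H) x)
  have hsurj : Function.Surjective k' := by
    rintro ⟨y, u, rfl⟩
    exact ⟨u, rfl⟩
  obtain ⟨C, hC, hCpre⟩ := k'.exists_preimage_norm_le hsurj
  refine ⟨A / C ^ 2, by positivity, ?_⟩
  rintro h ⟨u₀, rfl⟩
  refine ⟨?_, hup _⟩
  -- key inequality : ‖k u₀‖ ≤ C * ‖k* (k u₀)‖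
  set h := k u₀ with hh
  have hmem : h ∈ p := ⟨u₀, rfl⟩
  obtain ⟨u, hu, hun⟩ := hCpre ⟨h, hmem⟩
  have hku : k u = h := congrArg Subtype.val hu
  have hnorm : ‖(⟨h, hmem⟩ : p)‖ = ‖h‖ := rfl
  have key : ‖h‖ ^ 2 ≤ C * (‖(ContinuousLinearMap.adjoint k) h‖ * ‖h‖) := by
    have h1 : (‖h‖ : ℝ) ^ 2 = ‖(inner ℂ h h : ℂ)‖ := by
      rw [inner_self_eq_norm_sq_to_K]
      simp [abs_of_nonneg (norm_nonneg h)]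
    have h2 : (inner ℂ h h : ℂ) = inner ℂ ((ContinuousLinearMap.adjoint k) h) u := by
      rw [ContinuousLinearMap.adjoint_inner_left, hku]
    calc ‖h‖ ^ 2 = ‖(inner ℂ ((ContinuousLinearMap.adjoint k) h) u : ℂ)‖ := by rw [h1, h2]
      _ ≤ ‖(ContinuousLinearMap.adjoint k) h‖ * ‖u‖ := norm_inner_le_norm _ _
      _ ≤ ‖(ContinuousLinearMap.adjoint k) h‖ * (C * ‖h‖) := by
          refine mul_le_mul_of_nonneg_left ?_ (norm_nonneg _)
          simpa [hnorm] using hun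
      _ = C * (‖(ContinuousLinearMap.adjoint k) h‖ * ‖h‖) := by ring
  have key2 : ‖h‖ ^ 2 ≤ C ^ 2 * ‖(ContinuousLinearMap.adjoint k) h‖ ^ 2 := by
    rcases eq_or_lt_of_le (norm_nonneg h) with h0 | h0
    · rw [← h0]; simp; positivity
    · have : ‖h‖ ≤ C * ‖(ContinuousLinearMap.adjoint k) h‖ := by
        have := key
        nlinarith
      nlinarith [norm_nonneg ((ContinuousLinearMap.adjoint k) h), hC.le]
  refine le_trans ?_ (hlow h)
  apply ENNReal.ofReal_le_ofReal
  rw [div_mul_eq_mul_div, div_le_iff₀ (by positivity)]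
  nlinarith [hA.le]
end

section
/- Let H and H₀ be complex Hilbert spaces, (X,μ) a σ-finite measure space, k : H₀ → H a bounded linear operator, f : X → H a c-Bessel mapping for H, and g : X → H₀ a c-Bessel mapping for H₀. Let {e_i}_{i∈I} be an orthonormal basis of H and {γ_j}_{j∈J} an orthonormal basis of H₀. If ⟨k*(e_i), γ_j⟩ = ∫_X ⟨e_i, f(x)⟩ ⟨g(x), γ_j⟩ dμ(x) for all i ∈ I and j ∈ J, then ⟨k*(h), h₀⟩ = ∫_X ⟨h, f(x)⟩ ⟨g(x), h₀⟩ dμ(x) for all h ∈ H and h₀ ∈ H₀. -/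
open MeasureTheory
open scoped ENNReal

private lemma memLp_two_of_lintegral {X : Type*} [MeasurableSpace X] {μ : Measure X}
    {F : X → ℂ} (hF : Measurable F) {a : ℝ}
    (h : ∫⁻ x, (‖F x‖₊ : ℝ≥0∞) ^ 2 ∂μ ≤ ENNReal.ofReal a) : MemLp F 2 μ := by
  refine ⟨hF.aestronglyMeasurable, ?_⟩
  rw [eLpNorm_eq_lintegral_rpow_enorm_toReal two_ne_zero ENNReal.ofNat_ne_top]
  have h2 : (2 : ℝ≥0∞).toReal = ((2 : ℕ) : ℝ) := by norm_num
  rw [h2]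
  simp_rw [ENNReal.rpow_natCast]
  exact ENNReal.rpow_lt_top_of_nonneg (by norm_num)
    (h.trans_lt ENNReal.ofReal_lt_top).ne

private lemma integrable_mul_of_lintegral {X : Type*} [MeasurableSpace X] {μ : Measure X}
    {F G : X → ℂ} (hF : Measurable F) (hG : Measurable G) {a b : ℝ}
    (ha : ∫⁻ x, (‖F x‖₊ : ℝ≥0∞) ^ 2 ∂μ ≤ ENNReal.ofReal a)
    (hb : ∫⁻ x, (‖G x‖₊ : ℝ≥0∞) ^ 2 ∂μ ≤ ENNReal.ofReal b) :
    Integrable (fun x => F x * G x) μ := by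
  have hmem : MemLp (F • G) 1 μ :=
    (memLp_two_of_lintegral hG hb).smul (memLp_two_of_lintegral hF ha)
      (hpqr := ⟨by rw [inv_one, ENNReal.inv_two_add_inv_two]⟩)
  exact memLp_one_iff_integrable.mp hmem

private lemma norm_integral_mul_le_sqrt {X : Type*} [MeasurableSpace X] {μ : Measure X}
    {F G : X → ℂ} (hF : Measurable F) (hG : Measurable G) {a b : ℝ}
    (ha0 : 0 ≤ a) (hb0 : 0 ≤ b)
    (ha : ∫⁻ x, (‖F x‖₊ : ℝ≥0∞) ^ 2 ∂μ ≤ ENNReal.ofReal a)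
    (hb : ∫⁻ x, (‖G x‖₊ : ℝ≥0∞) ^ 2 ∂μ ≤ ENNReal.ofReal b) :
    ‖∫ x, F x * G x ∂μ‖ ≤ Real.sqrt a * Real.sqrt b := by
  have hconj : Real.HolderConjugate 2 2 := Real.HolderConjugate.two_two
  have key : ∫⁻ x, ENNReal.ofReal ‖F x * G x‖ ∂μ
      ≤ ENNReal.ofReal (Real.sqrt a * Real.sqrt b) := by
    calc ∫⁻ x, ENNReal.ofReal ‖F x * G x‖ ∂μ
        = ∫⁻ x, ((fun x => (‖F x‖₊ : ℝ≥0∞)) * fun x => (‖G x‖₊ : ℝ≥0∞)) x ∂μ := by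
          simp only [Pi.mul_apply, ← ENNReal.coe_mul, ← nnnorm_mul, ofReal_norm, enorm_eq_nnnorm]
      _ ≤ (∫⁻ x, (‖F x‖₊ : ℝ≥0∞) ^ (2 : ℝ) ∂μ) ^ (1 / (2:ℝ)) *
            (∫⁻ x, (‖G x‖₊ : ℝ≥0∞) ^ (2 : ℝ) ∂μ) ^ (1 / (2:ℝ)) :=
          ENNReal.lintegral_mul_le_Lp_mul_Lq μ hconj
            (hF.nnnorm.coe_nnreal_ennreal.aemeasurable)
            (hG.nnnorm.coe_nnreal_ennreal.aemeasurable)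
      _ ≤ (ENNReal.ofReal a) ^ (1 / (2:ℝ)) * (ENNReal.ofReal b) ^ (1 / (2:ℝ)) := by
          have h2 : ((2:ℕ) : ℝ) = (2 : ℝ) := by norm_num
          simp_rw [← h2, ENNReal.rpow_natCast]
          exact mul_le_mul' (ENNReal.rpow_le_rpow ha (by norm_num))
            (ENNReal.rpow_le_rpow hb (by norm_num))
      _ = ENNReal.ofReal (Real.sqrt a * Real.sqrt b) := by
          rw [Real.sqrt_eq_rpow, Real.sqrt_eq_rpow,
            ENNReal.ofReal_rpow_of_nonneg ha0 (by norm_num : (0:ℝ) ≤ 1/2),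
            ENNReal.ofReal_rpow_of_nonneg hb0 (by norm_num : (0:ℝ) ≤ 1/2),
            ← ENNReal.ofReal_mul (Real.rpow_nonneg ha0 _)]
  calc ‖∫ x, F x * G x ∂μ‖ ≤ (∫⁻ x, ENNReal.ofReal ‖F x * G x‖ ∂μ).toReal :=
        norm_integral_le_lintegral_norm _
    _ ≤ Real.sqrt a * Real.sqrt b := by
        have := ENNReal.toReal_mono ENNReal.ofReal_ne_top key
        rwa [ENNReal.toReal_ofReal
          (mul_nonneg (Real.sqrt_nonneg _) (Real.sqrt_nonneg _))] at this

/-- Generic construction: integration against a scalar `L²` function composed with inner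
products against a Bessel map gives a continuous linear functional. -/
private lemma exists_clm_integral {X : Type*} [MeasurableSpace X] (μ : Measure X)
    {E : Type*} [NormedAddCommGroup E] [InnerProductSpace ℂ E]
    (φ : X → E) (hφ : ∀ v : E, Measurable fun x => (inner ℂ v (φ x) : ℂ))
    (C : ℝ) (hC0 : 0 ≤ C)
    (hCb : ∀ v : E, ∫⁻ x, (‖(inner ℂ v (φ x) : ℂ)‖₊ : ℝ≥0∞) ^ 2 ∂μ ≤
      ENNReal.ofReal (C * ‖v‖ ^ 2))
    (F : X → ℂ) (hF : Measurable F) (a : ℝ) (ha0 : 0 ≤ a)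
    (haF : ∫⁻ x, (‖F x‖₊ : ℝ≥0∞) ^ 2 ∂μ ≤ ENNReal.ofReal a) :
    ∃ Λ : E →L[ℂ] ℂ, ∀ v : E, Λ v = ∫ x, F x * (inner ℂ (φ x) v : ℂ) ∂μ := by
  have hφ' : ∀ v : E, Measurable fun x => (inner ℂ (φ x) v : ℂ) := by
    intro v
    have : (fun x => (inner ℂ (φ x) v : ℂ)) =
        fun x => (starRingEnd ℂ) (inner ℂ v (φ x) : ℂ) := by
      funext x; rw [inner_conj_symm]
    rw [this]
    exact (RCLike.continuous_conj.measurable).comp (hφ v)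
  have hφb : ∀ v : E, ∫⁻ x, (‖(inner ℂ (φ x) v : ℂ)‖₊ : ℝ≥0∞) ^ 2 ∂μ ≤
      ENNReal.ofReal (C * ‖v‖ ^ 2) := by
    intro v
    have hnn : ∀ x, (‖(inner ℂ (φ x) v : ℂ)‖₊) = ‖(inner ℂ v (φ x) : ℂ)‖₊ := fun x => by
      rw [← inner_conj_symm v (φ x), RCLike.nnnorm_conj]
    calc ∫⁻ x, (‖(inner ℂ (φ x) v : ℂ)‖₊ : ℝ≥0∞) ^ 2 ∂μ
        = ∫⁻ x, (‖(inner ℂ v (φ x) : ℂ)‖₊ : ℝ≥0∞) ^ 2 ∂μ := by simp_rw [hnn]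
      _ ≤ ENNReal.ofReal (C * ‖v‖ ^ 2) := hCb v
  have hint : ∀ v : E, Integrable (fun x => F x * (inner ℂ (φ x) v : ℂ)) μ := fun v =>
    integrable_mul_of_lintegral hF (hφ' v) haF (hφb v)
  refine ⟨LinearMap.mkContinuous
    { toFun := fun v => ∫ x, F x * (inner ℂ (φ x) v : ℂ) ∂μ
      map_add' := by
        intro v w
        simp_rw [inner_add_right, mul_add]
        exact integral_add (hint v) (hint w)
      map_smul' := by
        intro c v
        simp_rw [inner_smul_right, RingHom.id_apply, mul_left_comm (F _) c]
        exact integral_const_mul c _ }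
    (Real.sqrt a * Real.sqrt C) ?_, fun v => rfl⟩
  intro v
  simp only [LinearMap.coe_mk, AddHom.coe_mk]
  calc ‖∫ x, F x * (inner ℂ (φ x) v : ℂ) ∂μ‖
      ≤ Real.sqrt a * Real.sqrt (C * ‖v‖ ^ 2) :=
        norm_integral_mul_le_sqrt hF (hφ' v) ha0
          (mul_nonneg hC0 (sq_nonneg _)) haF (hφb v)
    _ = Real.sqrt a * Real.sqrt C * ‖v‖ := by
        rw [Real.sqrt_mul hC0, Real.sqrt_sq (norm_nonneg v), mul_assoc]

/-- For c-Bessel mappings `f : X → H`, `g : X → H₀`, a bounded operator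
`k : H₀ → H`, and Hilbert (orthonormal) bases `{e_i}` of `H` and `{γ_j}` of `H₀`: if
`⟨k* e_i, γ_j⟩ = ∫ ⟨e_i, f x⟩ ⟨g x, γ_j⟩ dμ` for all `i, j`, then
`⟨k* h, h₀⟩ = ∫ ⟨h, f x⟩ ⟨g x, h₀⟩ dμ` for all `h ∈ H`, `h₀ ∈ H₀`. -/
theorem ck_dual_of_orthonormal_basis
    {H : Type*} [NormedAddCommGroup H] [InnerProductSpace ℂ H] [CompleteSpace H]
    {H₀ : Type*} [NormedAddCommGroup H₀] [InnerProductSpace ℂ H₀] [CompleteSpace H₀]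
    {X : Type*} [MeasurableSpace X] (μ : Measure X) [SigmaFinite μ]
    (k : H₀ →L[ℂ] H) (f : X → H) (g : X → H₀)
    (hfmeas : ∀ h : H, Measurable fun x => (inner ℂ h (f x) : ℂ))
    (hgmeas : ∀ h₀ : H₀, Measurable fun x => (inner ℂ h₀ (g x) : ℂ))
    (B : ℝ)
    (hfBessel : ∀ h : H,
      ∫⁻ x, (‖(inner ℂ h (f x) : ℂ)‖₊ : ℝ≥0∞) ^ 2 ∂μ ≤ ENNReal.ofReal (B * ‖h‖ ^ 2))
    (B' : ℝ)
    (hgBessel : ∀ h₀ : H₀,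
      ∫⁻ x, (‖(inner ℂ h₀ (g x) : ℂ)‖₊ : ℝ≥0∞) ^ 2 ∂μ ≤ ENNReal.ofReal (B' * ‖h₀‖ ^ 2))
    {I J : Type*} (e : HilbertBasis I ℂ H) (γ : HilbertBasis J ℂ H₀)
    (hbasis : ∀ (i : I) (j : J),
      (inner ℂ ((ContinuousLinearMap.adjoint k) (e i)) (γ j) : ℂ) =
        ∫ x, (inner ℂ (e i) (f x) : ℂ) * (inner ℂ (g x) (γ j) : ℂ) ∂μ) :
    ∀ (h : H) (h₀ : H₀),
      (inner ℂ ((ContinuousLinearMap.adjoint k) h) h₀ : ℂ) =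
        ∫ x, (inner ℂ h (f x) : ℂ) * (inner ℂ (g x) h₀ : ℂ) ∂μ := by
  -- replace B, B' by their nonneg parts
  set B₁ := max B 0 with hB₁
  set B₂ := max B' 0 with hB₂
  have hB₁0 : 0 ≤ B₁ := le_max_right _ _
  have hB₂0 : 0 ≤ B₂ := le_max_right _ _
  have hfB : ∀ h : H,
      ∫⁻ x, (‖(inner ℂ h (f x) : ℂ)‖₊ : ℝ≥0∞) ^ 2 ∂μ ≤ ENNReal.ofReal (B₁ * ‖h‖ ^ 2) :=
    fun h => (hfBessel h).trans (ENNReal.ofReal_le_ofReal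
      (mul_le_mul_of_nonneg_right (le_max_left _ _) (sq_nonneg _)))
  have hgB : ∀ h₀ : H₀,
      ∫⁻ x, (‖(inner ℂ h₀ (g x) : ℂ)‖₊ : ℝ≥0∞) ^ 2 ∂μ ≤ ENNReal.ofReal (B₂ * ‖h₀‖ ^ 2) :=
    fun h₀ => (hgBessel h₀).trans (ENNReal.ofReal_le_ofReal
      (mul_le_mul_of_nonneg_right (le_max_left _ _) (sq_nonneg _)))
  -- Step 1: the identity holds when h is a basis vector of e, for all h₀
  have step1 : ∀ (i : I) (h₀ : H₀),
      (inner ℂ ((ContinuousLinearMap.adjoint k) (e i)) h₀ : ℂ) =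
        ∫ x, (inner ℂ (e i) (f x) : ℂ) * (inner ℂ (g x) h₀ : ℂ) ∂μ := by
    intro i
    obtain ⟨Λ, hΛ⟩ := exists_clm_integral μ g hgmeas B₂ hB₂0 hgB
      (fun x => (inner ℂ (e i) (f x) : ℂ)) (hfmeas (e i)) (B₁ * ‖e i‖ ^ 2)
      (mul_nonneg hB₁0 (sq_nonneg _)) (hfB (e i))
    have heq : innerSL ℂ ((ContinuousLinearMap.adjoint k) (e i)) = Λ := by
      refine ContinuousLinearMap.ext_on (Submodule.dense_iff_topologicalClosure_eq_top.mpr γ.dense_span) ?_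
      rintro _ ⟨j, rfl⟩
      rw [hΛ]
      exact hbasis i j
    intro h₀
    have := congrFun (congrArg (fun L : H₀ →L[ℂ] ℂ => (L : H₀ → ℂ)) heq) h₀
    simpa [hΛ] using this
  -- Step 2: extend to arbitrary h by another density argument (in conjugate form)
  intro h h₀
  obtain ⟨Λ, hΛ⟩ := exists_clm_integral μ f hfmeas B₁ hB₁0 hfB
    (fun x => (inner ℂ h₀ (g x) : ℂ)) (hgmeas h₀) (B₂ * ‖h₀‖ ^ 2)
    (mul_nonneg hB₂0 (sq_nonneg _)) (hgB h₀)
  have heq : (innerSL ℂ h₀).comp (ContinuousLinearMap.adjoint k) = Λ := by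
    refine ContinuousLinearMap.ext_on (Submodule.dense_iff_topologicalClosure_eq_top.mpr e.dense_span) ?_
    rintro _ ⟨i, rfl⟩
    rw [hΛ]
    have h1 : (inner ℂ h₀ ((ContinuousLinearMap.adjoint k) (e i)) : ℂ) =
        (starRingEnd ℂ) (inner ℂ ((ContinuousLinearMap.adjoint k) (e i)) h₀ : ℂ) := by
      rw [inner_conj_symm]
    rw [ContinuousLinearMap.comp_apply, innerSL_apply_apply, h1, step1 i h₀, ← integral_conj]
    congr 1
    funext x
    rw [map_mul, inner_conj_symm, inner_conj_symm, mul_comm]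
  have hv := congrFun (congrArg (fun L : H →L[ℂ] ℂ => (L : H → ℂ)) heq) h
  simp only [ContinuousLinearMap.comp_apply, innerSL_apply_apply] at hv
  rw [hΛ] at hv
  have := congrArg (starRingEnd ℂ) hv
  rw [inner_conj_symm, ← integral_conj] at this
  rw [this]
  congr 1
  funext x
  rw [map_mul, inner_conj_symm, inner_conj_symm, mul_comm]
end

section
/- Let H and H₀ be complex Hilbert spaces, (X,μ) a σ-finite measure space, k : H₀ → H a surjective bounded linear operator, f : X → H a c-Bessel mapping for H, and g : X → H₀ a c-Bessel mapping for H₀. If ‖k h₀‖² = ∫_X ⟨h₀, g(x)⟩ ⟨f(x), k h₀⟩ dμ(x) for every h₀ ∈ H₀, then ⟨k*(h), h₀⟩ = ∫_X ⟨h, f(x)⟩ ⟨g(x), h₀⟩ dμ(x) for all h ∈ H and h₀ ∈ H₀ (and conversely). -/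
open MeasureTheory
open scoped ENNReal

lemma memLp_two_of_bound {X : Type*} [MeasurableSpace X] {μ : Measure X}
    (a : X → ℂ) (ha : Measurable a) {C : ℝ}
    (h : ∫⁻ x, (‖a x‖₊ : ℝ≥0∞) ^ 2 ∂μ ≤ ENNReal.ofReal C) : MemLp a 2 μ := by
  refine ⟨ha.aestronglyMeasurable, ?_⟩
  rw [eLpNorm_eq_lintegral_rpow_enorm_toReal two_ne_zero ENNReal.ofNat_ne_top]
  have h2 : (2 : ℝ≥0∞).toReal = (2 : ℝ) := by simp
  rw [h2]
  have : ∫⁻ x, (‖a x‖₊ : ℝ≥0∞) ^ (2 : ℝ) ∂μ ≤ ENNReal.ofReal C := by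
    simpa [ENNReal.rpow_natCast] using h
  exact ENNReal.rpow_lt_top_of_nonneg (by norm_num)
    (lt_of_le_of_lt this ENNReal.ofReal_lt_top).ne

lemma sesq_polarization {V : Type*} [AddCommGroup V] [Module ℂ V] (Q : V → V → ℂ)
    (hadd1 : ∀ u v w, Q (u + v) w = Q u w + Q v w)
    (hadd2 : ∀ u v w, Q u (v + w) = Q u v + Q u w)
    (hsmul1 : ∀ (c : ℂ) u w, Q (c • u) w = (starRingEnd ℂ) c * Q u w)
    (hsmul2 : ∀ (c : ℂ) u w, Q u (c • w) = c * Q u w)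
    (hdiag : ∀ u, Q u u = 0) : ∀ u v, Q u v = 0 := by
  intro u v
  have e1 : Q u v + Q v u = 0 := by
    have h := hdiag (u + v)
    rw [hadd1, hadd2, hadd2, hdiag, hdiag] at h
    linear_combination h
  have e2 : Q u v - Q v u = 0 := by
    have h := hdiag (u + Complex.I • v)
    simp only [hadd1, hadd2, hsmul1, hsmul2, hdiag, Complex.conj_I] at h
    linear_combination (-Complex.I) * h + (Q u v - Q v u) * Complex.I_mul_I
  linear_combination (e1 + e2) / 2

/-- For a surjective bounded operator `k : H₀ → H` and c-Bessel mappings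
`f : X → H`, `g : X → H₀`: `‖k h₀‖² = ∫ ⟨h₀, g x⟩ ⟨f x, k h₀⟩ dμ` holds for every
`h₀ ∈ H₀` if and only if `⟨k* h, h₀⟩ = ∫ ⟨h, f x⟩ ⟨g x, h₀⟩ dμ` for all `h ∈ H`,
`h₀ ∈ H₀`. -/
theorem ck_dual_iff_norm_identity_of_surjective
    {H : Type*} [NormedAddCommGroup H] [InnerProductSpace ℂ H] [CompleteSpace H]
    {H₀ : Type*} [NormedAddCommGroup H₀] [InnerProductSpace ℂ H₀] [CompleteSpace H₀]
    {X : Type*} [MeasurableSpace X] (μ : Measure X) [SigmaFinite μ]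
    (k : H₀ →L[ℂ] H) (hk : Function.Surjective k)
    (f : X → H) (g : X → H₀)
    (hfmeas : ∀ h : H, Measurable fun x => (inner ℂ h (f x) : ℂ))
    (hgmeas : ∀ h₀ : H₀, Measurable fun x => (inner ℂ h₀ (g x) : ℂ))
    (B : ℝ)
    (hfBessel : ∀ h : H,
      ∫⁻ x, (‖(inner ℂ h (f x) : ℂ)‖₊ : ℝ≥0∞) ^ 2 ∂μ ≤ ENNReal.ofReal (B * ‖h‖ ^ 2))
    (B' : ℝ)
    (hgBessel : ∀ h₀ : H₀,
      ∫⁻ x, (‖(inner ℂ h₀ (g x) : ℂ)‖₊ : ℝ≥0∞) ^ 2 ∂μ ≤ ENNReal.ofReal (B' * ‖h₀‖ ^ 2)) :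
    (∀ h₀ : H₀, ((‖k h₀‖ ^ 2 : ℝ) : ℂ) =
        ∫ x, (inner ℂ h₀ (g x) : ℂ) * (inner ℂ (f x) (k h₀) : ℂ) ∂μ) ↔
      (∀ (h : H) (h₀ : H₀),
        (inner ℂ ((ContinuousLinearMap.adjoint k) h) h₀ : ℂ) =
          ∫ x, (inner ℂ h (f x) : ℂ) * (inner ℂ (g x) h₀ : ℂ) ∂μ) := by
  have hmemf : ∀ h : H, MemLp (fun x => (inner ℂ h (f x) : ℂ)) 2 μ :=
    fun h => memLp_two_of_bound _ (hfmeas h) (hfBessel h)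
  have hgmeas' : ∀ h₀ : H₀, Measurable fun x => (inner ℂ (g x) h₀ : ℂ) := by
    intro h₀
    have : (fun x => (inner ℂ (g x) h₀ : ℂ)) =
        fun x => (starRingEnd ℂ) (inner ℂ h₀ (g x) : ℂ) := by
      funext x; rw [inner_conj_symm]
    rw [this]
    exact (Complex.continuous_conj.measurable).comp (hgmeas h₀)
  have hmemg : ∀ h₀ : H₀, MemLp (fun x => (inner ℂ (g x) h₀ : ℂ)) 2 μ := by
    intro h₀
    refine memLp_two_of_bound _ (hgmeas' h₀) (C := B' * ‖h₀‖ ^ 2) ?_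
    have hnn : ∀ x : X, (‖(inner ℂ (g x) h₀ : ℂ)‖₊ : ℝ≥0∞) =
        (‖(inner ℂ h₀ (g x) : ℂ)‖₊ : ℝ≥0∞) := by
      intro x
      rw [← inner_conj_symm h₀ (g x), RCLike.nnnorm_conj]
    simp only [hnn]
    exact hgBessel h₀
  have hint : ∀ (h : H) (h₀ : H₀),
      Integrable (fun x => (inner ℂ h (f x) : ℂ) * (inner ℂ (g x) h₀ : ℂ)) μ := by
    intro h h₀
    have h12 : (1 : ℝ≥0∞) / 1 = 1 / 2 + 1 / 2 := by
      simp only [one_div]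
      rw [ENNReal.inv_two_add_inv_two, inv_one]
      
    haveI : ENNReal.HolderTriple 2 2 1 := ⟨by rw [ENNReal.inv_two_add_inv_two, inv_one]⟩
    have := ((hmemg h₀).smul (hmemf h) (p := 2) (q := 2) (r := 1))
    rw [memLp_one_iff_integrable] at this
    exact this
  -- conjugation identity
  have hconj : ∀ v : H₀,
      (∫ x, (inner ℂ v (g x) : ℂ) * (inner ℂ (f x) (k v) : ℂ) ∂μ) =
        (starRingEnd ℂ) (∫ x, (inner ℂ (k v) (f x) : ℂ) * (inner ℂ (g x) v : ℂ) ∂μ) := by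
    intro v
    rw [← integral_conj]
    congr 1; funext x
    rw [map_mul, inner_conj_symm, inner_conj_symm, mul_comm]
  constructor
  · intro hyp h h₀
    obtain ⟨u, rfl⟩ := hk h
    have hdiag : ∀ v : H₀,
        (∫ x, (inner ℂ (k v) (f x) : ℂ) * (inner ℂ (g x) v : ℂ) ∂μ) =
          (inner ℂ (k v) (k v) : ℂ) := by
      intro v
      have h1 := hyp v
      rw [hconj v] at h1
      have h3 : (∫ x, (inner ℂ (k v) (f x) : ℂ) * (inner ℂ (g x) v : ℂ) ∂μ) =
          (starRingEnd ℂ) ((‖k v‖ ^ 2 : ℝ) : ℂ) := by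
        rw [h1]; simp
      rw [h3, inner_self_eq_norm_sq_to_K]
      push_cast
      simp
    have Hadd1 : ∀ u v w : H₀,
        ((inner ℂ (k (u + v)) (k w) : ℂ) -
            ∫ x, (inner ℂ (k (u + v)) (f x) : ℂ) * (inner ℂ (g x) w : ℂ) ∂μ) =
          ((inner ℂ (k u) (k w) : ℂ) -
              ∫ x, (inner ℂ (k u) (f x) : ℂ) * (inner ℂ (g x) w : ℂ) ∂μ) +
            ((inner ℂ (k v) (k w) : ℂ) -
              ∫ x, (inner ℂ (k v) (f x) : ℂ) * (inner ℂ (g x) w : ℂ) ∂μ) := by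
      intro u v w
      have e : (∫ x, (inner ℂ (k (u + v)) (f x) : ℂ) * (inner ℂ (g x) w : ℂ) ∂μ) =
          (∫ x, (inner ℂ (k u) (f x) : ℂ) * (inner ℂ (g x) w : ℂ) ∂μ) +
            ∫ x, (inner ℂ (k v) (f x) : ℂ) * (inner ℂ (g x) w : ℂ) ∂μ := by
        rw [← integral_add (hint _ _) (hint _ _)]
        congr 1; funext x
        rw [k.map_add, inner_add_left, add_mul]
      rw [e, k.map_add, inner_add_left]; ring
    have Hadd2 : ∀ u v w : H₀,
        ((inner ℂ (k u) (k (v + w)) : ℂ) -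
            ∫ x, (inner ℂ (k u) (f x) : ℂ) * (inner ℂ (g x) (v + w) : ℂ) ∂μ) =
          ((inner ℂ (k u) (k v) : ℂ) -
              ∫ x, (inner ℂ (k u) (f x) : ℂ) * (inner ℂ (g x) v : ℂ) ∂μ) +
            ((inner ℂ (k u) (k w) : ℂ) -
              ∫ x, (inner ℂ (k u) (f x) : ℂ) * (inner ℂ (g x) w : ℂ) ∂μ) := by
      intro u v w
      have e : (∫ x, (inner ℂ (k u) (f x) : ℂ) * (inner ℂ (g x) (v + w) : ℂ) ∂μ) =
          (∫ x, (inner ℂ (k u) (f x) : ℂ) * (inner ℂ (g x) v : ℂ) ∂μ) +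
            ∫ x, (inner ℂ (k u) (f x) : ℂ) * (inner ℂ (g x) w : ℂ) ∂μ := by
        rw [← integral_add (hint _ _) (hint _ _)]
        congr 1; funext x
        rw [inner_add_right, mul_add]
      rw [e, k.map_add, inner_add_right]; ring
    have Hsmul1 : ∀ (c : ℂ) (u w : H₀),
        ((inner ℂ (k (c • u)) (k w) : ℂ) -
            ∫ x, (inner ℂ (k (c • u)) (f x) : ℂ) * (inner ℂ (g x) w : ℂ) ∂μ) =
          (starRingEnd ℂ) c * ((inner ℂ (k u) (k w) : ℂ) -
            ∫ x, (inner ℂ (k u) (f x) : ℂ) * (inner ℂ (g x) w : ℂ) ∂μ) := by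
      intro c u w
      have e : (∫ x, (inner ℂ (k (c • u)) (f x) : ℂ) * (inner ℂ (g x) w : ℂ) ∂μ) =
          (starRingEnd ℂ) c *
            ∫ x, (inner ℂ (k u) (f x) : ℂ) * (inner ℂ (g x) w : ℂ) ∂μ := by
        rw [show ((starRingEnd ℂ) c * ∫ x, (inner ℂ (k u) (f x) : ℂ) * (inner ℂ (g x) w : ℂ) ∂μ)
            = (starRingEnd ℂ) c • ∫ x, (inner ℂ (k u) (f x) : ℂ) * (inner ℂ (g x) w : ℂ) ∂μ
            from rfl, ← integral_smul]
        congr 1; funext x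
        rw [k.map_smul, inner_smul_left]
        simp [smul_eq_mul, mul_assoc]
      rw [e, k.map_smul, inner_smul_left]; ring
    have Hsmul2 : ∀ (c : ℂ) (u w : H₀),
        ((inner ℂ (k u) (k (c • w)) : ℂ) -
            ∫ x, (inner ℂ (k u) (f x) : ℂ) * (inner ℂ (g x) (c • w) : ℂ) ∂μ) =
          c * ((inner ℂ (k u) (k w) : ℂ) -
            ∫ x, (inner ℂ (k u) (f x) : ℂ) * (inner ℂ (g x) w : ℂ) ∂μ) := by
      intro c u w
      have e : (∫ x, (inner ℂ (k u) (f x) : ℂ) * (inner ℂ (g x) (c • w) : ℂ) ∂μ) =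
          c * ∫ x, (inner ℂ (k u) (f x) : ℂ) * (inner ℂ (g x) w : ℂ) ∂μ := by
        rw [show (c * ∫ x, (inner ℂ (k u) (f x) : ℂ) * (inner ℂ (g x) w : ℂ) ∂μ)
            = c • ∫ x, (inner ℂ (k u) (f x) : ℂ) * (inner ℂ (g x) w : ℂ) ∂μ
            from rfl, ← integral_smul]
        congr 1; funext x
        rw [inner_smul_right]
        simp [smul_eq_mul]; ring
      rw [e, k.map_smul, inner_smul_right]; ring
    have hQ := sesq_polarization
      (fun u v => (inner ℂ (k u) (k v) : ℂ) -
        ∫ x, (inner ℂ (k u) (f x) : ℂ) * (inner ℂ (g x) v : ℂ) ∂μ)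
      Hadd1 Hadd2 Hsmul1 Hsmul2 (fun v => sub_eq_zero_of_eq (hdiag v).symm)
    have hzero : (inner ℂ (k u) (k h₀) : ℂ) -
        ∫ x, (inner ℂ (k u) (f x) : ℂ) * (inner ℂ (g x) h₀ : ℂ) ∂μ = 0 := hQ u h₀
    rw [ContinuousLinearMap.adjoint_inner_left]
    linear_combination hzero
  · intro hyp h₀
    have h1 : (inner ℂ (k h₀) (k h₀) : ℂ) =
        ∫ x, (inner ℂ (k h₀) (f x) : ℂ) * (inner ℂ (g x) h₀ : ℂ) ∂μ := by
      have := hyp (k h₀) h₀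
      rwa [ContinuousLinearMap.adjoint_inner_left] at this
    rw [hconj h₀, ← h1, inner_self_eq_norm_sq_to_K]
    push_cast
    simp
end

section
/- Let H and H₀ be complex Hilbert spaces, (X,μ) a σ-finite measure space, k : H₀ → H a bounded linear operator whose adjoint k* is surjective, f : X → H a c-Bessel mapping for H, and g : X → H₀ a c-Bessel mapping for H₀. If ‖k*(h)‖² = ∫_X ⟨h, f(x)⟩ ⟨g(x), k*(h)⟩ dμ(x) for every h ∈ H, then ⟨k*(h), h₀⟩ = ∫_X ⟨h, f(x)⟩ ⟨g(x), h₀⟩ dμ(x) for all h ∈ H and h₀ ∈ H₀ (and conversely). -/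
open MeasureTheory
open scoped ENNReal

lemma memLtwo_of_lintegral {X : Type*} [MeasurableSpace X] {μ : Measure X}
    {u : X → ℂ} (hm : Measurable u) {C : ℝ}
    (hb : ∫⁻ x, (‖u x‖₊ : ℝ≥0∞) ^ 2 ∂μ ≤ ENNReal.ofReal C) :
    MemLp u 2 μ := by
  refine ⟨hm.aestronglyMeasurable, ?_⟩
  rw [eLpNorm_eq_lintegral_rpow_enorm_toReal (by norm_num) (by norm_num)]
  refine ENNReal.rpow_lt_top_of_nonneg (by norm_num) ?_
  have h2 : ((2:ℝ≥0∞).toReal) = ((2:ℕ):ℝ) := by norm_num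
  have : ∫⁻ x, (‖u x‖₊ : ℝ≥0∞) ^ ((2:ℝ≥0∞).toReal) ∂μ ≤ ENNReal.ofReal C := by
    simp_rw [h2, ENNReal.rpow_natCast]
    exact hb
  exact (this.trans_lt ENNReal.ofReal_lt_top).ne

lemma integrable_mul_L2 {X : Type*} [MeasurableSpace X] {μ : Measure X}
    {u v : X → ℂ} (hu : MemLp u 2 μ) (hv : MemLp v 2 μ) :
    Integrable (fun x => u x * v x) μ := by
  have h : MemLp (u • v) 1 μ := hv.smul hu
  exact memLp_one_iff_integrable.mp (by simpa [Pi.smul_apply, smul_eq_mul, Pi.mul_def] using h)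

lemma polarization_zero {E : Type*} [AddCommGroup E] [Module ℂ E] (D : E → E → ℂ)
    (hadd1 : ∀ a b c, D (a + b) c = D a c + D b c)
    (hadd2 : ∀ a b c, D a (b + c) = D a b + D a c)
    (hsmul1 : ∀ (r : ℂ) a b, D (r • a) b = (starRingEnd ℂ) r * D a b)
    (hsmul2 : ∀ (r : ℂ) a b, D a (r • b) = r * D a b)
    (hdiag : ∀ a, D a a = 0) : ∀ a b, D a b = 0 := by
  intro a b
  have e1 : D a b + D b a = 0 := by
    have h := hdiag (a + b)
    rw [hadd1, hadd2, hadd2, hdiag, hdiag] at h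
    linear_combination h
  have e2 : Complex.I * D a b - Complex.I * D b a = 0 := by
    have h := hdiag (a + Complex.I • b)
    simp only [hadd1, hadd2, hsmul1, hsmul2, hdiag, Complex.conj_I] at h
    linear_combination h
  have hI : (Complex.I : ℂ) ≠ 0 := Complex.I_ne_zero
  have : D a b = D b a :=
    mul_left_cancel₀ hI (by linear_combination e2)
  linear_combination (1/2 : ℂ) * e1 + (1/2 : ℂ) * this

/-- For a bounded operator `k : H₀ → H` with surjective adjoint `k*` and
c-Bessel mappings `f : X → H`, `g : X → H₀`:
`‖k* h‖² = ∫ ⟨h, f x⟩ ⟨g x, k* h⟩ dμ` holds for every `h ∈ H` if and only if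
`⟨k* h, h₀⟩ = ∫ ⟨h, f x⟩ ⟨g x, h₀⟩ dμ` for all `h ∈ H`, `h₀ ∈ H₀`. -/
theorem ck_dual_iff_adjoint_norm_identity_of_adjoint_surjective
    {H : Type*} [NormedAddCommGroup H] [InnerProductSpace ℂ H] [CompleteSpace H]
    {H₀ : Type*} [NormedAddCommGroup H₀] [InnerProductSpace ℂ H₀] [CompleteSpace H₀]
    {X : Type*} [MeasurableSpace X] (μ : Measure X) [SigmaFinite μ]
    (k : H₀ →L[ℂ] H) (hk : Function.Surjective (ContinuousLinearMap.adjoint k))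
    (f : X → H) (g : X → H₀)
    (hfmeas : ∀ h : H, Measurable fun x => (inner ℂ h (f x) : ℂ))
    (hgmeas : ∀ h₀ : H₀, Measurable fun x => (inner ℂ h₀ (g x) : ℂ))
    (B : ℝ)
    (hfBessel : ∀ h : H,
      ∫⁻ x, (‖(inner ℂ h (f x) : ℂ)‖₊ : ℝ≥0∞) ^ 2 ∂μ ≤ ENNReal.ofReal (B * ‖h‖ ^ 2))
    (B' : ℝ)
    (hgBessel : ∀ h₀ : H₀,
      ∫⁻ x, (‖(inner ℂ h₀ (g x) : ℂ)‖₊ : ℝ≥0∞) ^ 2 ∂μ ≤ ENNReal.ofReal (B' * ‖h₀‖ ^ 2)) :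
    (∀ h : H, ((‖(ContinuousLinearMap.adjoint k) h‖ ^ 2 : ℝ) : ℂ) =
        ∫ x, (inner ℂ h (f x) : ℂ) *
          (inner ℂ (g x) ((ContinuousLinearMap.adjoint k) h) : ℂ) ∂μ) ↔
      (∀ (h : H) (h₀ : H₀),
        (inner ℂ ((ContinuousLinearMap.adjoint k) h) h₀ : ℂ) =
          ∫ x, (inner ℂ h (f x) : ℂ) * (inner ℂ (g x) h₀ : ℂ) ∂μ) := by
  
  set K := ContinuousLinearMap.adjoint k with hKdef
  have hgm2 : ∀ h₀ : H₀, Measurable fun x => (inner ℂ (g x) h₀ : ℂ) := by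
    intro h₀
    have e : (fun x => (inner ℂ (g x) h₀ : ℂ)) =
        fun x => (starRingEnd ℂ) (inner ℂ h₀ (g x) : ℂ) := by
      funext x; rw [inner_conj_symm]
    rw [e]
    exact Complex.continuous_conj.measurable.comp (hgmeas h₀)
  have hmemf : ∀ h : H, MemLp (fun x => (inner ℂ h (f x) : ℂ)) 2 μ :=
    fun h => memLtwo_of_lintegral (hfmeas h) (hfBessel h)
  have hmemg : ∀ h₀ : H₀, MemLp (fun x => (inner ℂ (g x) h₀ : ℂ)) 2 μ := by
    intro h₀
    apply memLtwo_of_lintegral (hgm2 h₀)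
    calc ∫⁻ x, (‖(inner ℂ (g x) h₀ : ℂ)‖₊ : ℝ≥0∞) ^ 2 ∂μ
        = ∫⁻ x, (‖(inner ℂ h₀ (g x) : ℂ)‖₊ : ℝ≥0∞) ^ 2 ∂μ := by
          congr 1; funext x
          rw [← inner_conj_symm, RCLike.nnnorm_conj]
      _ ≤ ENNReal.ofReal (B' * ‖h₀‖ ^ 2) := hgBessel h₀
  have hint : ∀ (a : H) (b : H₀),
      Integrable (fun x => (inner ℂ a (f x) : ℂ) * (inner ℂ (g x) b : ℂ)) μ :=
    fun a b => integrable_mul_L2 (hmemf a) (hmemg b)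
  constructor
  · intro hyp h h₀
    obtain ⟨h', rfl⟩ := hk h₀
    have key := polarization_zero
      (fun a b => (inner ℂ (K a) (K b) : ℂ) -
        ∫ x, (inner ℂ a (f x) : ℂ) * (inner ℂ (g x) (K b) : ℂ) ∂μ)
      ?_ ?_ ?_ ?_ ?_ h h'
    · exact sub_eq_zero.mp (by simpa using key)
    · intro a b c
      have hi : (∫ x, (inner ℂ (a + b) (f x) : ℂ) * (inner ℂ (g x) (K c) : ℂ) ∂μ)
          = (∫ x, (inner ℂ a (f x) : ℂ) * (inner ℂ (g x) (K c) : ℂ) ∂μ)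
            + ∫ x, (inner ℂ b (f x) : ℂ) * (inner ℂ (g x) (K c) : ℂ) ∂μ := by
        rw [← integral_add (hint a (K c)) (hint b (K c))]
        congr 1; funext x; rw [inner_add_left]; ring
      rw [hi, map_add, inner_add_left]; ring
    · intro a b c
      have hi : (∫ x, (inner ℂ a (f x) : ℂ) * (inner ℂ (g x) (K b + K c) : ℂ) ∂μ)
          = (∫ x, (inner ℂ a (f x) : ℂ) * (inner ℂ (g x) (K b) : ℂ) ∂μ)
            + ∫ x, (inner ℂ a (f x) : ℂ) * (inner ℂ (g x) (K c) : ℂ) ∂μ := by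
        rw [← integral_add (hint a (K b)) (hint a (K c))]
        congr 1; funext x; rw [inner_add_right]; ring
      rw [map_add, hi, inner_add_right]; ring
    · intro r a b
      have hi : (∫ x, (inner ℂ (r • a) (f x) : ℂ) * (inner ℂ (g x) (K b) : ℂ) ∂μ)
          = (starRingEnd ℂ) r *
            ∫ x, (inner ℂ a (f x) : ℂ) * (inner ℂ (g x) (K b) : ℂ) ∂μ := by
        rw [← integral_const_mul]
        congr 1; funext x; rw [inner_smul_left]; ring
      rw [hi, _root_.map_smul, inner_smul_left]; ring
    · intro r a b
      have hi : (∫ x, (inner ℂ a (f x) : ℂ) * (inner ℂ (g x) (r • K b) : ℂ) ∂μ)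
          = r * ∫ x, (inner ℂ a (f x) : ℂ) * (inner ℂ (g x) (K b) : ℂ) ∂μ := by
        rw [← integral_const_mul]
        congr 1; funext x; rw [inner_smul_right]; ring
      rw [_root_.map_smul, hi, inner_smul_right]; ring
    · intro a
      rw [sub_eq_zero, inner_self_eq_norm_sq_to_K]
      have := hyp a
      push_cast at this ⊢
      exact this
  · intro hyp h
    have := hyp h (K h)
    rw [← this, inner_self_eq_norm_sq_to_K]
    push_cast
    rfl
end

section
/- Let H and H₀ be complex Hilbert spaces, (X,μ) a σ-finite measure space, k : H₀ → H a bounded linear operator, f : X → H a c-Bessel mapping for H with bound B, and g : X → H₀ a c-Bessel mapping for H₀ with bound B'. Suppose f, g form a ck-dual pair: ⟨k h₀, h⟩ = ∫_X ⟨h₀, g(x)⟩ ⟨f(x), h⟩ dμ(x) for all h₀ ∈ H₀ and h ∈ H. Then g is a ck*-frame for H₀ with respect to H with lower bound B⁻¹, i.e., B⁻¹‖k h₀‖² ≤ ∫_X |⟨h₀, g(x)⟩|² dμ(x) for all h₀ ∈ H₀; and f is a ck-frame for H with respect to H₀ with lower bound (B')⁻¹, i.e., (B')⁻¹‖k*(h)‖²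 ≤ ∫_X |⟨h, f(x)⟩|² dμ(x) for all h ∈ H. -/
open MeasureTheory
open scoped ENNReal

lemma ck_aux {X : Type*} [MeasurableSpace X] (μ : Measure X) (p q : X → ℂ)
    (hp : Measurable p) (hq : Measurable q)
    (C n : ℝ) (hC : 0 < C) (hn : 0 ≤ n)
    (hq2 : ∫⁻ x, (‖q x‖₊ : ℝ≥0∞) ^ 2 ∂μ ≤ ENNReal.ofReal (C * n ^ 2))
    (hfin : ∫⁻ x, (‖p x‖₊ : ℝ≥0∞) ^ 2 ∂μ ≠ ∞)
    (heq : (n ^ 2 : ℝ) = ‖∫ x, p x * q x ∂μ‖) :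
    ENNReal.ofReal (C⁻¹ * n ^ 2) ≤ ∫⁻ x, (‖p x‖₊ : ℝ≥0∞) ^ 2 ∂μ := by
  set G : ℝ≥0∞ := ∫⁻ x, (‖p x‖₊ : ℝ≥0∞) ^ 2 ∂μ with hG
  have hconj : (2 : ℝ).HolderConjugate 2 := Real.HolderConjugate.two_two
  have hHolder : ∫⁻ x, (‖p x‖₊ : ℝ≥0∞) * ‖q x‖₊ ∂μ ≤
      G ^ (1/2 : ℝ) * (∫⁻ x, (‖q x‖₊ : ℝ≥0∞) ^ 2 ∂μ) ^ (1/2 : ℝ) := by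
    have h := ENNReal.lintegral_mul_le_Lp_mul_Lq μ hconj
      (f := fun x => (‖p x‖₊ : ℝ≥0∞)) (g := fun x => (‖q x‖₊ : ℝ≥0∞))
      (hp.nnnorm.coe_nnreal_ennreal).aemeasurable (hq.nnnorm.coe_nnreal_ennreal).aemeasurable
    have e2 : ∀ (r : X → ℂ), (fun x => (‖r x‖₊ : ℝ≥0∞) ^ (2:ℝ)) =
        fun x => (‖r x‖₊ : ℝ≥0∞) ^ 2 := by
      intro r; funext x
      rw [show ((2:ℝ)) = ((2:ℕ):ℝ) by norm_num, ENNReal.rpow_natCast]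
    rw [e2 p, e2 q] at h
    exact h
  have hnormint : ‖∫ x, p x * q x ∂μ‖ ≤
      (∫⁻ x, (‖p x‖₊ : ℝ≥0∞) * ‖q x‖₊ ∂μ).toReal := by
    have h1 := norm_integral_le_lintegral_norm (μ := μ) (fun x => p x * q x)
    have h2 : (∫⁻ x, ENNReal.ofReal ‖p x * q x‖ ∂μ) =
        ∫⁻ x, (‖p x‖₊ : ℝ≥0∞) * ‖q x‖₊ ∂μ := by
      refine lintegral_congr fun x => ?_
      rw [norm_mul, ← coe_nnnorm, ← coe_nnnorm, ← NNReal.coe_mul,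
        ENNReal.ofReal_coe_nnreal, ENNReal.coe_mul]
    rw [h2] at h1; exact h1
  have hGfin : G ^ (1/2 : ℝ) ≠ ∞ := ENNReal.rpow_ne_top_of_nonneg (by norm_num) hfin
  have hQle : (∫⁻ x, (‖q x‖₊ : ℝ≥0∞) ^ 2 ∂μ) ^ (1/2 : ℝ) ≤
      (ENNReal.ofReal (C * n ^ 2)) ^ (1/2 : ℝ) := ENNReal.rpow_le_rpow hq2 (by norm_num)
  have hQfin : (∫⁻ x, (‖q x‖₊ : ℝ≥0∞) ^ 2 ∂μ) ^ (1/2 : ℝ) ≠ ∞ :=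
    ne_top_of_le_ne_top (ENNReal.rpow_ne_top_of_nonneg (by norm_num) ENNReal.ofReal_ne_top) hQle
  have hRfin : G ^ (1/2 : ℝ) * (∫⁻ x, (‖q x‖₊ : ℝ≥0∞) ^ 2 ∂μ) ^ (1/2 : ℝ) ≠ ∞ :=
    ENNReal.mul_ne_top hGfin hQfin
  have e1 : (G ^ (1/2 : ℝ)).toReal = Real.sqrt G.toReal := by
    rw [← ENNReal.toReal_rpow, Real.sqrt_eq_rpow]
  have e3 : ((ENNReal.ofReal (C * n ^ 2)) ^ (1/2 : ℝ)).toReal = Real.sqrt C * n := by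
    rw [ENNReal.ofReal_rpow_of_nonneg (by positivity) (by norm_num),
      ENNReal.toReal_ofReal (by positivity), ← Real.sqrt_eq_rpow, Real.sqrt_mul hC.le,
      Real.sqrt_sq hn]
  have key : n ^ 2 ≤ Real.sqrt G.toReal * (Real.sqrt C * n) := by
    have h3 : n ^ 2 ≤ (G ^ (1/2 : ℝ) * (∫⁻ x, (‖q x‖₊ : ℝ≥0∞) ^ 2 ∂μ) ^ (1/2 : ℝ)).toReal := by
      rw [heq]
      exact hnormint.trans (ENNReal.toReal_mono hRfin hHolder)
    refine h3.trans ?_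
    rw [ENNReal.toReal_mul, e1]
    refine mul_le_mul_of_nonneg_left ?_ (Real.sqrt_nonneg _)
    calc ((∫⁻ x, (‖q x‖₊ : ℝ≥0∞) ^ 2 ∂μ) ^ (1/2 : ℝ)).toReal
        ≤ ((ENNReal.ofReal (C * n ^ 2)) ^ (1/2 : ℝ)).toReal :=
          ENNReal.toReal_mono (ENNReal.rpow_ne_top_of_nonneg (by norm_num)
            ENNReal.ofReal_ne_top) hQle
      _ = Real.sqrt C * n := e3
  rcases eq_or_lt_of_le hn with hn0 | hn0
  · simp [← hn0]
  · have hle : n ≤ Real.sqrt G.toReal * Real.sqrt C := by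
      have : n * n ≤ Real.sqrt G.toReal * Real.sqrt C * n := by
        nlinarith [key]
      exact le_of_mul_le_mul_right this hn0
    have hsq : n ^ 2 ≤ G.toReal * C := by
      have h5 : n ^ 2 ≤ (Real.sqrt G.toReal * Real.sqrt C) ^ 2 := by
        nlinarith [hle, hn0, Real.sqrt_nonneg G.toReal, Real.sqrt_nonneg C]
      calc n ^ 2 ≤ (Real.sqrt G.toReal * Real.sqrt C) ^ 2 := h5
        _ = G.toReal * C := by
          rw [mul_pow, Real.sq_sqrt ENNReal.toReal_nonneg, Real.sq_sqrt hC.le]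
    have hfinal : C⁻¹ * n ^ 2 ≤ G.toReal := by
      rw [inv_mul_le_iff₀ hC]
      linarith [hsq]
    calc ENNReal.ofReal (C⁻¹ * n ^ 2) ≤ ENNReal.ofReal G.toReal :=
          ENNReal.ofReal_le_ofReal hfinal
      _ = G := ENNReal.ofReal_toReal hfin

lemma nnsw {E : Type*} [NormedAddCommGroup E] [InnerProductSpace ℂ E] (u v : E) :
    (‖(inner ℂ u v : ℂ)‖₊ : ℝ≥0∞) = (‖(inner ℂ v u : ℂ)‖₊ : ℝ≥0∞) := by
  congr 1
  ext
  simp only [coe_nnnorm]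
  exact norm_inner_symm u v

theorem ck_dual_pair_frames
    {H : Type*} [NormedAddCommGroup H] [InnerProductSpace ℂ H] [CompleteSpace H]
    {H₀ : Type*} [NormedAddCommGroup H₀] [InnerProductSpace ℂ H₀] [CompleteSpace H₀]
    {X : Type*} [MeasurableSpace X] (μ : Measure X) [SigmaFinite μ]
    (k : H₀ →L[ℂ] H) (f : X → H) (g : X → H₀)
    (hfmeas : ∀ h : H, Measurable fun x => (inner ℂ h (f x) : ℂ))
    (hgmeas : ∀ h₀ : H₀, Measurable fun x => (inner ℂ h₀ (g x) : ℂ))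
    (B : ℝ) (hB : 0 < B)
    (hfBessel : ∀ h : H,
      ∫⁻ x, (‖(inner ℂ h (f x) : ℂ)‖₊ : ℝ≥0∞) ^ 2 ∂μ ≤ ENNReal.ofReal (B * ‖h‖ ^ 2))
    (B' : ℝ) (hB' : 0 < B')
    (hgBessel : ∀ h₀ : H₀,
      ∫⁻ x, (‖(inner ℂ h₀ (g x) : ℂ)‖₊ : ℝ≥0∞) ^ 2 ∂μ ≤ ENNReal.ofReal (B' * ‖h₀‖ ^ 2))
    (hdual : ∀ (h₀ : H₀) (h : H),
      (inner ℂ (k h₀) h : ℂ) = ∫ x, (inner ℂ h₀ (g x) : ℂ) * (inner ℂ (f x) h : ℂ) ∂μ) :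
    (∀ h₀ : H₀,
      ENNReal.ofReal (B⁻¹ * ‖k h₀‖ ^ 2) ≤
        ∫⁻ x, (‖(inner ℂ h₀ (g x) : ℂ)‖₊ : ℝ≥0∞) ^ 2 ∂μ) ∧
    (∀ h : H,
      ENNReal.ofReal (B'⁻¹ * ‖(ContinuousLinearMap.adjoint k) h‖ ^ 2) ≤
        ∫⁻ x, (‖(inner ℂ h (f x) : ℂ)‖₊ : ℝ≥0∞) ^ 2 ∂μ) := by
  constructor
  · intro h₀
    set v := k h₀ with hv
    have hqmeas : Measurable fun x => (inner ℂ (f x) v : ℂ) := by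
      have he : (fun x => (inner ℂ (f x) v : ℂ)) =
          fun x => starRingEnd ℂ (inner ℂ v (f x)) := by
        funext x; rw [inner_conj_symm]
      rw [he]
      exact Complex.conjCLE.continuous.measurable.comp (hfmeas v)
    refine ck_aux μ (fun x => (inner ℂ h₀ (g x) : ℂ)) (fun x => (inner ℂ (f x) v : ℂ))
      (hgmeas h₀) hqmeas B ‖v‖ hB (norm_nonneg _) ?_ ?_ ?_
    · calc ∫⁻ x, (‖(inner ℂ (f x) v : ℂ)‖₊ : ℝ≥0∞) ^ 2 ∂μ
          = ∫⁻ x, (‖(inner ℂ v (f x) : ℂ)‖₊ : ℝ≥0∞) ^ 2 ∂μ :=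
            lintegral_congr fun x => by simp only [nnsw (f x) v]
        _ ≤ ENNReal.ofReal (B * ‖v‖ ^ 2) := hfBessel v
    · exact ne_top_of_le_ne_top ENNReal.ofReal_ne_top (hgBessel h₀)
    · rw [← hdual h₀ v, inner_self_eq_norm_sq_to_K]
      simp [hv]
  · intro h
    set u := (ContinuousLinearMap.adjoint k) h with hu
    have hqmeas : Measurable fun x => (inner ℂ (f x) h : ℂ) := by
      have he : (fun x => (inner ℂ (f x) h : ℂ)) =
          fun x => starRingEnd ℂ (inner ℂ h (f x)) := by
        funext x; rw [inner_conj_symm]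
      rw [he]
      exact Complex.conjCLE.continuous.measurable.comp (hfmeas h)
    have main := ck_aux μ (fun x => (inner ℂ (f x) h : ℂ)) (fun x => (inner ℂ u (g x) : ℂ))
      hqmeas (hgmeas u) B' ‖u‖ hB' (norm_nonneg _)
      (hgBessel u)
      (by
        refine ne_top_of_le_ne_top ENNReal.ofReal_ne_top (le_trans (le_of_eq ?_) (hfBessel h))
        exact lintegral_congr fun x => by simp only [nnsw (f x) h])
      (by
        have he2 : (∫ x, (inner ℂ (f x) h : ℂ) * (inner ℂ u (g x) : ℂ) ∂μ) =
            ∫ x, (inner ℂ u (g x) : ℂ) * (inner ℂ (f x) h : ℂ) ∂μ := by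
          refine integral_congr_ae (Filter.Eventually.of_forall fun x => ?_)
          ring
        rw [he2, ← hdual u h]
        have he3 : (inner ℂ (k u) h : ℂ) = (inner ℂ u u : ℂ) := by
          rw [← ContinuousLinearMap.adjoint_inner_right k u h, ← hu]
        rw [he3, inner_self_eq_norm_sq_to_K]
        simp)
    calc ENNReal.ofReal (B'⁻¹ * ‖u‖ ^ 2)
        ≤ ∫⁻ x, (‖(inner ℂ (f x) h : ℂ)‖₊ : ℝ≥0∞) ^ 2 ∂μ := main
      _ = ∫⁻ x, (‖(inner ℂ h (f x) : ℂ)‖₊ : ℝ≥0∞) ^ 2 ∂μ :=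
          lintegral_congr fun x => by simp only [nnsw (f x) h]
end

section
/- Let H and H₀ be complex Hilbert spaces, (X,μ) a σ-finite measure space, k : H₀ → H a bounded linear operator with closed range, and f : X → H a Bochner integrable, weakly measurable map that is a ck-frame for H with respect to H₀ with bounds A, B. Let π denote the orthogonal projection of H onto the (closed) range of k. Then there exist a weakly measurable map g : X → H₀ which is a c-Bessel mapping for H₀ and a constant D > 0 such that: (i) g is a ck-dual of π∘f, i.e., ⟨k*(h), h₀⟩ = ∫_X ⟨h, π(f(x))⟩ ⟨g(x), h₀⟩ dμ(x) for all h ∈ H and h₀ ∈ H₀; and (ii) B⁻¹‖k h₀‖² ≤ ∫_X |⟨h₀, g(x)⟩|² dμ(x) ≤ D‖h₀‖² for all h₀ ∈ H₀, so that g is a ck*-frame for H₀ with respect to H with lower bound B⁻¹. -/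
open MeasureTheory
open scoped ENNReal

set_option maxHeartbeats 8000000 in
/-- Let `k : H₀ → H` be a bounded operator with closed range and let
`f : X → H` be a Bochner integrable, weakly measurable ck-frame for `H` with respect to
`H₀` with bounds `A, B`. Let `π` be the orthogonal projection of `H` onto `R(k)`
(characterized by `π h ∈ R(k)` and `h - π h ⟂ R(k)`). Then there exist a weakly
measurable c-Bessel mapping `g : X → H₀` and `D > 0` such that
(i) `g` is a ck-dual of `π ∘ f`: `⟨k* h, h₀⟩ = ∫ ⟨h, π (f x)⟩ ⟨g x, h₀⟩ dμ` for all
`h ∈ H`, `h₀ ∈ H₀`; and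
(ii) `B⁻¹ ‖k h₀‖² ≤ ∫ |⟨h₀, g x⟩|² dμ ≤ D ‖h₀‖²` for all `h₀ ∈ H₀`. -/
theorem exists_ck_dual_of_projection
    {H : Type*} [NormedAddCommGroup H] [InnerProductSpace ℂ H] [CompleteSpace H]
    {H₀ : Type*} [NormedAddCommGroup H₀] [InnerProductSpace ℂ H₀] [CompleteSpace H₀]
    {X : Type*} [MeasurableSpace X] (μ : Measure X) [SigmaFinite μ]
    (k : H₀ →L[ℂ] H) (hclosed : IsClosed (Set.range k))
    (f : X → H) (hf_int : Integrable f μ)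
    (hfmeas : ∀ h : H, Measurable fun x => (inner ℂ h (f x) : ℂ))
    (A B : ℝ) (hA : 0 < A) (hB : 0 < B)
    (hlow : ∀ h : H,
      ENNReal.ofReal (A * ‖(ContinuousLinearMap.adjoint k) h‖ ^ 2) ≤
        ∫⁻ x, (‖(inner ℂ h (f x) : ℂ)‖₊ : ℝ≥0∞) ^ 2 ∂μ)
    (hup : ∀ h : H,
      ∫⁻ x, (‖(inner ℂ h (f x) : ℂ)‖₊ : ℝ≥0∞) ^ 2 ∂μ ≤ ENNReal.ofReal (B * ‖h‖ ^ 2))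
    (π : H →L[ℂ] H)
    (hπ_mem : ∀ h : H, π h ∈ Set.range k)
    (hπ_orth : ∀ h : H, ∀ w ∈ Set.range k, (inner ℂ (h - π h) w : ℂ) = 0) :
    ∃ g : X → H₀,
      (∀ h₀ : H₀, Measurable fun x => (inner ℂ h₀ (g x) : ℂ)) ∧
      ∃ D : ℝ, 0 < D ∧
        (∀ (h : H) (h₀ : H₀),
          Integrable (fun x => (inner ℂ h (π (f x)) : ℂ) * (inner ℂ (g x) h₀ : ℂ)) μ ∧
          (inner ℂ ((ContinuousLinearMap.adjoint k) h) h₀ : ℂ) =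
            ∫ x, (inner ℂ h (π (f x)) : ℂ) * (inner ℂ (g x) h₀ : ℂ) ∂μ) ∧
        (∀ h₀ : H₀,
          ENNReal.ofReal (B⁻¹ * ‖k h₀‖ ^ 2) ≤
              ∫⁻ x, (‖(inner ℂ h₀ (g x) : ℂ)‖₊ : ℝ≥0∞) ^ 2 ∂μ ∧
            ∫⁻ x, (‖(inner ℂ h₀ (g x) : ℂ)‖₊ : ℝ≥0∞) ^ 2 ∂μ ≤
              ENNReal.ofReal (D * ‖h₀‖ ^ 2)) := by
  classical
  have keysq : ∀ φ : X → ℂ, eLpNorm φ 2 μ ^ 2 = ∫⁻ x, (‖φ x‖₊ : ℝ≥0∞) ^ 2 ∂μ := by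
    intro φ
    rw [eLpNorm_eq_lintegral_rpow_enorm_toReal two_ne_zero ENNReal.ofNat_ne_top]
    rw [← ENNReal.rpow_natCast _ 2, ← ENNReal.rpow_mul]
    norm_num
    rfl
  set Φ : H → X → ℂ := fun h x => (inner ℂ (f x) h : ℂ) with hΦ
  have hΦmeas : ∀ h : H, Measurable (Φ h) := by
    intro h
    have : Φ h = fun x => (starRingEnd ℂ) (inner ℂ h (f x) : ℂ) := by
      funext x; exact (inner_conj_symm (f x) h).symm
    rw [this]
    exact (Complex.continuous_conj.measurable).comp (hfmeas h)
  have hΦnorm : ∀ (h : H) (x : X), ‖Φ h x‖ = ‖(inner ℂ h (f x) : ℂ)‖ := by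
    intro h x
    rw [hΦ]; simp only []
    rw [← inner_conj_symm (f x) h]
    exact RCLike.norm_conj _
  have hΦsq : ∀ h : H,
      eLpNorm (Φ h) 2 μ ^ 2 = ∫⁻ x, (‖(inner ℂ h (f x) : ℂ)‖₊ : ℝ≥0∞) ^ 2 ∂μ := by
    intro h
    rw [keysq]
    refine lintegral_congr fun x => ?_
    congr 1
    exact congrArg _ (NNReal.eq (by simpa using hΦnorm h x))
  have hΦlt : ∀ h : H, eLpNorm (Φ h) 2 μ < ⊤ := by
    intro h
    by_contra hc
    have htop : eLpNorm (Φ h) 2 μ = ⊤ := top_unique (not_lt.1 hc)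
    have h2 := (hΦsq h).trans_le (hup h)
    rw [htop, ENNReal.top_pow (by norm_num)] at h2
    exact ENNReal.ofReal_ne_top (top_le_iff.mp h2)
  have memΦ : ∀ h : H, MemLp (Φ h) 2 μ := fun h =>
    ⟨(hΦmeas h).aestronglyMeasurable, hΦlt h⟩
  have hbound : ∀ h : H, ‖(memΦ h).toLp (Φ h)‖ ≤ Real.sqrt B * ‖h‖ := by
    intro h
    rw [Lp.norm_toLp]
    have h1 : eLpNorm (Φ h) 2 μ ≤ ENNReal.ofReal (Real.sqrt B * ‖h‖) := by
      have hsq : (ENNReal.ofReal (Real.sqrt B * ‖h‖)) ^ 2 = ENNReal.ofReal (B * ‖h‖ ^ 2) := by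
        rw [← ENNReal.ofReal_pow (by positivity)]
        congr 1
        rw [mul_pow, Real.sq_sqrt hB.le]
      by_contra hc
      push_neg at hc
      have h2 : (ENNReal.ofReal (Real.sqrt B * ‖h‖)) ^ 2 < eLpNorm (Φ h) 2 μ ^ 2 :=
        ENNReal.pow_lt_pow_left (by norm_num) hc
      rw [hsq, hΦsq h] at h2
      exact absurd (hup h) (not_le.2 h2)
    calc (eLpNorm (Φ h) 2 μ).toReal ≤ (ENNReal.ofReal (Real.sqrt B * ‖h‖)).toReal :=
          ENNReal.toReal_mono ENNReal.ofReal_ne_top h1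
      _ = Real.sqrt B * ‖h‖ := ENNReal.toReal_ofReal (by positivity)
  set Θlin : H →ₗ[ℂ] (Lp ℂ 2 μ) :=
    { toFun := fun h => (memΦ h).toLp (Φ h)
      map_add' := by
        intro a b
        rw [← MemLp.toLp_add (memΦ a) (memΦ b)]
        apply MemLp.toLp_congr
        filter_upwards with x
        simp [hΦ, inner_add_right]
      map_smul' := by
        intro c a
        simp only [RingHom.id_apply]
        show (memΦ (c • a)).toLp (Φ (c • a)) = c • (memΦ a).toLp (Φ a)
        rw [← MemLp.toLp_const_smul c (memΦ a)]
        apply MemLp.toLp_congr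
        filter_upwards with x
        simp [hΦ, inner_smul_right] } with hΘlin
  set Θ : H →L[ℂ] (Lp ℂ 2 μ) := Θlin.mkContinuous (Real.sqrt B) (fun h => hbound h) with hΘdef
  have hΘapp : ∀ h : H, Θ h = (memΦ h).toLp (Φ h) := fun _ => rfl
  have hΘle : ∀ h : H, ‖Θ h‖ ≤ Real.sqrt B * ‖h‖ := fun h => hbound h
  have hΘcoe : ∀ a : H, (Θ a : X → ℂ) =ᵐ[μ] Φ a := by
    intro a
    rw [hΘapp a]
    exact MemLp.coeFn_toLp (memΦ a)
  have hΘinner : ∀ a b : H,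
      (inner ℂ (Θ a) (Θ b) : ℂ) = ∫ x, (inner ℂ a (f x) : ℂ) * (inner ℂ (f x) b : ℂ) ∂μ := by
    intro a b
    rw [MeasureTheory.L2.inner_def]
    refine integral_congr_ae ?_
    filter_upwards [hΘcoe a, hΘcoe b] with x hxa hxb
    rw [RCLike.inner_apply, hxa, hxb]
    rw [mul_comm]
    congr 1
    exact inner_conj_symm a (f x)
  have hΘintg : ∀ a b : H,
      Integrable (fun x => (inner ℂ a (f x) : ℂ) * (inner ℂ (f x) b : ℂ)) μ := by
    intro a b
    refine (MeasureTheory.L2.integrable_inner (𝕜 := ℂ) (Θ a) (Θ b)).congr ?_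
    filter_upwards [hΘcoe a, hΘcoe b] with x hxa hxb
    rw [RCLike.inner_apply, hxa, hxb]
    rw [mul_comm]
    congr 1
    exact inner_conj_symm a (f x)
  set S : H →L[ℂ] H := (ContinuousLinearMap.adjoint Θ).comp Θ with hSdef
  have hSinner : ∀ a b : H, (inner ℂ (S a) b : ℂ) = (inner ℂ (Θ a) (Θ b) : ℂ) := by
    intro a b
    show (inner ℂ ((ContinuousLinearMap.adjoint Θ) (Θ a)) b : ℂ) = _
    exact ContinuousLinearMap.adjoint_inner_left Θ b (Θ a)
  -- Norm of Θ h from below via hlow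
  have hΘnormsq : ∀ h : H, (‖Θ h‖ : ℝ) ^ 2 =
      (∫⁻ x, (‖(inner ℂ h (f x) : ℂ)‖₊ : ℝ≥0∞) ^ 2 ∂μ).toReal := by
    intro h
    rw [hΘapp h, Lp.norm_toLp, ← ENNReal.toReal_pow, hΦsq h]
  have hfin : ∀ h : H, (∫⁻ x, (‖(inner ℂ h (f x) : ℂ)‖₊ : ℝ≥0∞) ^ 2 ∂μ) ≠ ⊤ := by
    intro h
    exact ne_top_of_le_ne_top ENNReal.ofReal_ne_top (hup h)
  have hΘlow : ∀ h : H,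
      A * ‖(ContinuousLinearMap.adjoint k) h‖ ^ 2 ≤ ‖Θ h‖ ^ 2 := by
    intro h
    rw [hΘnormsq h]
    exact (ENNReal.ofReal_le_iff_le_toReal (hfin h)).mp (hlow h)
  have hΘup : ∀ h : H, ‖Θ h‖ ^ 2 ≤ B * ‖h‖ ^ 2 := by
    intro h
    rw [hΘnormsq h]
    have := ENNReal.toReal_mono ENNReal.ofReal_ne_top (hup h)
    rwa [ENNReal.toReal_ofReal (by positivity)] at this
  -- Projection facts
  have hfix : ∀ v ∈ Set.range k, π v = v := by
    rintro v hv
    have h1 : v - π v ∈ Set.range k := by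
      obtain ⟨a, ha⟩ := hv; obtain ⟨b, hb⟩ := hπ_mem v
      exact ⟨a - b, by rw [map_sub, ha, hb]⟩
    have h2 := hπ_orth v (v - π v) h1
    have h3 : v - π v = 0 := inner_self_eq_zero.mp h2
    have := sub_eq_zero.mp h3
    exact this.symm
  have hsa : ∀ a b : H, (inner ℂ (π a) b : ℂ) = (inner ℂ a (π b) : ℂ) := by
    intro a b
    have h1 : (inner ℂ (π a) (b - π b) : ℂ) = 0 := by
      rw [← inner_conj_symm]
      rw [hπ_orth b (π a) (hπ_mem a)]
      simp
    have h2 : (inner ℂ (a - π a) (π b) : ℂ) = 0 := hπ_orth a (π b) (hπ_mem b)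
    have e1 : (inner ℂ (π a) b : ℂ) = inner ℂ (π a) (π b) := by
      have := inner_sub_right (𝕜 := ℂ) (π a) b (π b)
      rw [h1] at this
      exact sub_eq_zero.mp this.symm
    have e2 : (inner ℂ a (π b) : ℂ) = inner ℂ (π a) (π b) := by
      have := inner_sub_left (𝕜 := ℂ) a (π a) (π b)
      rw [h2] at this
      exact sub_eq_zero.mp this.symm
    rw [e1, e2]
  -- lower bound for k* on range of k via open mapping theorem
  have hRngSet : ((LinearMap.range (k : H₀ →ₗ[ℂ] H) : Submodule ℂ H) : Set H) = Set.range k := by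
    exact LinearMap.coe_range _
  haveI hcomplete : CompleteSpace (LinearMap.range (k : H₀ →ₗ[ℂ] H) : Submodule ℂ H) := by
    exact (show IsClosed ((LinearMap.range (k : H₀ →ₗ[ℂ] H) : Submodule ℂ H) : Set H) by
      rw [hRngSet]; exact hclosed).completeSpace_coe
  obtain ⟨C, hC0, hC⟩ := ContinuousLinearMap.exists_preimage_norm_le
    (k.codRestrict (LinearMap.range (k : H₀ →ₗ[ℂ] H)) (fun x => LinearMap.mem_range_self _ x))
    (by
      rintro ⟨v, hv⟩
      obtain ⟨a, ha⟩ := hv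
      exact ⟨a, Subtype.ext ha⟩)
  have hc0 : ∀ v ∈ Set.range k, ‖v‖ ≤ C * ‖(ContinuousLinearMap.adjoint k) v‖ := by
    intro v hv
    obtain ⟨a, ha⟩ := hv
    obtain ⟨x, hx, hxn⟩ := hC ⟨v, ⟨a, ha⟩⟩
    have hkx : k x = v := congrArg Subtype.val hx
    have hnx : ‖x‖ ≤ C * ‖v‖ := hxn
    have h1 : ‖v‖ ^ 2 = RCLike.re (inner ℂ ((ContinuousLinearMap.adjoint k) v) x : ℂ) := by
      rw [ContinuousLinearMap.adjoint_inner_left, hkx]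
      exact (inner_self_eq_norm_sq v).symm
    have h2 : RCLike.re (inner ℂ ((ContinuousLinearMap.adjoint k) v) x : ℂ) ≤
        ‖(ContinuousLinearMap.adjoint k) v‖ * ‖x‖ := by
      calc RCLike.re (inner ℂ ((ContinuousLinearMap.adjoint k) v) x : ℂ)
          ≤ ‖(inner ℂ ((ContinuousLinearMap.adjoint k) v) x : ℂ)‖ := RCLike.re_le_norm _
        _ ≤ _ := norm_inner_le_norm _ _
    rcases eq_or_lt_of_le (norm_nonneg v) with hv0 | hv0
    · rw [← hv0]; positivity
    · have h3 : ‖v‖ ^ 2 ≤ ‖(ContinuousLinearMap.adjoint k) v‖ * (C * ‖v‖) := by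
        rw [h1]
        exact h2.trans (mul_le_mul_of_nonneg_left hnx (norm_nonneg _))
      nlinarith [norm_nonneg ((ContinuousLinearMap.adjoint k) v)]
  -- the operator T
  set T : H →L[ℂ] H := π.comp (S.comp π) + (ContinuousLinearMap.id ℂ H - π) with hTdef
  have hTapp : ∀ h : H, T h = π (S (π h)) + (h - π h) := by
    intro h; simp [hTdef]
  set m : ℝ := min (A / C ^ 2) 1 with hmdef
  have hm : 0 < m := lt_min (by positivity) one_pos
  have hPyth : ∀ h : H, ‖h‖ ^ 2 = ‖π h‖ ^ 2 + ‖h - π h‖ ^ 2 := by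
    intro h
    have h0 : (inner ℂ (π h) (h - π h) : ℂ) = 0 := by
      rw [← inner_conj_symm]
      rw [hπ_orth h (π h) (hπ_mem h)]
      simp
    have h2 := norm_add_sq_eq_norm_sq_add_norm_sq_of_inner_eq_zero (π h) (h - π h) h0
    rw [add_sub_cancel] at h2
    simpa [pow_two] using h2
  have hTcoer : ∀ h : H, m * ‖h‖ ^ 2 ≤ RCLike.re (inner ℂ (T h) h : ℂ) := by
    intro h
    have hre : RCLike.re (inner ℂ (T h) h : ℂ) = ‖Θ (π h)‖ ^ 2 + ‖h - π h‖ ^ 2 := by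
      rw [hTapp h, inner_add_left]
      have e1 : (inner ℂ (π (S (π h))) h : ℂ) = inner ℂ (Θ (π h)) (Θ (π h)) := by
        rw [hsa (S (π h)) h]
        have hππ : π (π h) = π h := hfix (π h) (hπ_mem h)
        rw [show (inner ℂ (S (π h)) (π h) : ℂ) = inner ℂ (Θ (π h)) (Θ (π h)) from hSinner _ _]
      have e2 : (inner ℂ (h - π h) h : ℂ) = inner ℂ (h - π h) (h - π h) := by
        have := inner_sub_right (𝕜 := ℂ) (h - π h) h (π h)
        have h0 : (inner ℂ (h - π h) (π h) : ℂ) = 0 := hπ_orth h (π h) (hπ_mem h)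
        rw [h0, sub_zero] at this
        exact this.symm
      rw [e1, e2, map_add, inner_self_eq_norm_sq, inner_self_eq_norm_sq]
    rw [hre]
    have h1 : A * ‖(ContinuousLinearMap.adjoint k) (π h)‖ ^ 2 ≤ ‖Θ (π h)‖ ^ 2 := hΘlow (π h)
    have h2 : ‖π h‖ ≤ C * ‖(ContinuousLinearMap.adjoint k) (π h)‖ := hc0 (π h) (hπ_mem h)
    have h3 : (A / C ^ 2) * ‖π h‖ ^ 2 ≤ A * ‖(ContinuousLinearMap.adjoint k) (π h)‖ ^ 2 := by
      have h2sq : ‖π h‖ ^ 2 ≤ C ^ 2 * ‖(ContinuousLinearMap.adjoint k) (π h)‖ ^ 2 := by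
        nlinarith [norm_nonneg (π h), norm_nonneg ((ContinuousLinearMap.adjoint k) (π h)), hC0]
      rw [div_mul_eq_mul_div, div_le_iff₀ (by positivity)]
      nlinarith [hA]
    have h4 : m ≤ A / C ^ 2 := min_le_left _ _
    have h5 : m ≤ 1 := min_le_right _ _
    have h6 := hPyth h
    nlinarith [norm_nonneg (π h), norm_nonneg (h - π h), sq_nonneg (‖π h‖), sq_nonneg (‖h - π h‖)]
  have hTlow : ∀ h : H, m * ‖h‖ ≤ ‖T h‖ := by
    intro h
    rcases eq_or_lt_of_le (norm_nonneg h) with h0 | h0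
    · rw [← h0]; simp
    · have h1 : m * ‖h‖ ^ 2 ≤ ‖T h‖ * ‖h‖ := by
        calc m * ‖h‖ ^ 2 ≤ RCLike.re (inner ℂ (T h) h : ℂ) := hTcoer h
          _ ≤ ‖(inner ℂ (T h) h : ℂ)‖ := RCLike.re_le_norm _
          _ ≤ ‖T h‖ * ‖h‖ := norm_inner_le_norm _ _
      nlinarith
  have hTanti : AntilipschitzWith (Real.toNNReal m)⁻¹ T := by
    apply ContinuousLinearMap.antilipschitz_of_bound
    intro x
    have h2 : m * ‖x‖ ≤ ‖T x‖ := hTlow x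
    rw [NNReal.coe_inv, Real.coe_toNNReal m hm.le]
    calc ‖x‖ = m⁻¹ * (m * ‖x‖) := by field_simp
      _ ≤ m⁻¹ * ‖T x‖ := mul_le_mul_of_nonneg_left h2 (by positivity)
  have hTinj : LinearMap.ker (T : H →ₗ[ℂ] H) = ⊥ := by
    rw [Submodule.eq_bot_iff]
    intro x hx
    have hx0 : T x = 0 := LinearMap.mem_ker.mp hx
    have h2 := hTlow x
    rw [hx0] at h2
    simp only [norm_zero] at h2
    have : ‖x‖ = 0 := le_antisymm (by nlinarith) (norm_nonneg x)
    exact norm_eq_zero.mp this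
  haveI : CompleteSpace (LinearMap.range (T : H →ₗ[ℂ] H) : Submodule ℂ H) :=
    hTanti.completeSpace_range_clm
  have hTsurj : LinearMap.range (T : H →ₗ[ℂ] H) = ⊤ := by
    rw [← Submodule.orthogonal_eq_bot_iff]
    rw [Submodule.eq_bot_iff]
    intro w hw
    have h0 : (inner ℂ (T w) w : ℂ) = 0 :=
      (Submodule.mem_orthogonal _ w).mp hw (T w) ⟨w, rfl⟩
    have h1 := hTcoer w
    rw [h0] at h1
    simp only [map_zero] at h1
    have hw0 : ‖w‖ = 0 := by
      by_contra hne
      have hpos : 0 < ‖w‖ := lt_of_le_of_ne (norm_nonneg w) (Ne.symm hne)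
      exact absurd h1 (not_le.mpr (mul_pos hm (pow_pos hpos 2)))
    exact norm_eq_zero.mp hw0
  set E := ContinuousLinearEquiv.ofBijective T hTinj hTsurj with hEdef
  set Einv : H →L[ℂ] H := (E.symm : H ≃L[ℂ] H).toContinuousLinearMap with hEinv
  set M : H →L[ℂ] H := Einv.comp π with hMdef
  set u : H₀ →L[ℂ] H := (ContinuousLinearMap.adjoint M).comp k with hudef
  set g : X → H₀ := fun x => (ContinuousLinearMap.adjoint k) (M (f x)) with hgdef
  have hg1 : ∀ (h₀ : H₀) (x : X), (inner ℂ h₀ (g x) : ℂ) = (inner ℂ (u h₀) (f x) : ℂ) := by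
    intro h₀ x
    rw [hgdef]
    simp only []
    rw [ContinuousLinearMap.adjoint_inner_right k h₀ (M (f x))]
    rw [← ContinuousLinearMap.adjoint_inner_left M (f x) (k h₀)]
    rfl
  have hg2 : ∀ (h₀ : H₀) (x : X), (inner ℂ (g x) h₀ : ℂ) = (inner ℂ (f x) (u h₀) : ℂ) := by
    intro h₀ x
    rw [← inner_conj_symm (g x) h₀, hg1 h₀ x, inner_conj_symm]
  have hMS : ∀ h : H, M (S (π h)) = π h := by
    intro h
    have hππ : π (π h) = π h := hfix (π h) (hπ_mem h)
    have hT : T (π h) = π (S (π h)) := by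
      rw [hTapp (π h), hππ]
      simp
    have h1 : M (S (π h)) = E.symm (π (S (π h))) := rfl
    rw [h1, ← hT, hEdef]
    exact ContinuousLinearEquiv.ofBijective_symm_apply_apply T hTinj hTsurj (π h)
  -- duality identity
  have hdual : ∀ (h : H) (h₀ : H₀),
      (inner ℂ ((ContinuousLinearMap.adjoint k) h) h₀ : ℂ) =
        ∫ x, (inner ℂ h (π (f x)) : ℂ) * (inner ℂ (g x) h₀ : ℂ) ∂μ := by
    intro h h₀
    have hint_eq : (fun x => (inner ℂ h (π (f x)) : ℂ) * (inner ℂ (g x) h₀ : ℂ)) =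
        fun x => (inner ℂ (π h) (f x) : ℂ) * (inner ℂ (f x) (u h₀) : ℂ) := by
      funext x
      rw [hsa h (f x), hg2 h₀ x]
    rw [hint_eq, ← hΘinner (π h) (u h₀), ← hSinner (π h) (u h₀)]
    have e1 : (inner ℂ (S (π h)) (u h₀) : ℂ) = inner ℂ (M (S (π h))) (k h₀) := by
      rw [hudef]
      simp only [ContinuousLinearMap.coe_comp', Function.comp_apply]
      exact ContinuousLinearMap.adjoint_inner_right M (S (π h)) (k h₀)
    rw [e1, hMS h]
    rw [hsa h (k h₀), hfix (k h₀) ⟨h₀, rfl⟩]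
    exact ContinuousLinearMap.adjoint_inner_left k h₀ h
  have hintg : ∀ (h : H) (h₀ : H₀),
      Integrable (fun x => (inner ℂ h (π (f x)) : ℂ) * (inner ℂ (g x) h₀ : ℂ)) μ := by
    intro h h₀
    have hint_eq : (fun x => (inner ℂ h (π (f x)) : ℂ) * (inner ℂ (g x) h₀ : ℂ)) =
        fun x => (inner ℂ (π h) (f x) : ℂ) * (inner ℂ (f x) (u h₀) : ℂ) := by
      funext x
      rw [hsa h (f x), hg2 h₀ x]
    rw [hint_eq]
    exact hΘintg (π h) (u h₀)
  -- the upper (Bessel) bound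
  set D : ℝ := B * ‖u‖ ^ 2 + 1 with hDdef
  have hD : 0 < D := by positivity
  have hgL : ∀ h₀ : H₀, (∫⁻ x, (‖(inner ℂ h₀ (g x) : ℂ)‖₊ : ℝ≥0∞) ^ 2 ∂μ) =
      ∫⁻ x, (‖(inner ℂ (u h₀) (f x) : ℂ)‖₊ : ℝ≥0∞) ^ 2 ∂μ := by
    intro h₀
    refine lintegral_congr fun x => ?_
    rw [hg1 h₀ x]
  have hup' : ∀ h₀ : H₀,
      (∫⁻ x, (‖(inner ℂ h₀ (g x) : ℂ)‖₊ : ℝ≥0∞) ^ 2 ∂μ) ≤ ENNReal.ofReal (D * ‖h₀‖ ^ 2) := by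
    intro h₀
    rw [hgL h₀]
    refine (hup (u h₀)).trans (ENNReal.ofReal_le_ofReal ?_)
    have h1 : ‖u h₀‖ ≤ ‖u‖ * ‖h₀‖ := u.le_opNorm h₀
    have h2 : ‖u h₀‖ ^ 2 ≤ (‖u‖ * ‖h₀‖) ^ 2 := by
      apply pow_le_pow_left₀ (norm_nonneg _) h1
    calc B * ‖u h₀‖ ^ 2 ≤ B * ((‖u‖ * ‖h₀‖) ^ 2) := mul_le_mul_of_nonneg_left h2 hB.le
      _ = (B * ‖u‖ ^ 2) * ‖h₀‖ ^ 2 := by ring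
      _ ≤ D * ‖h₀‖ ^ 2 := by
          apply mul_le_mul_of_nonneg_right _ (sq_nonneg _)
          rw [hDdef]
          linarith [sq_nonneg (‖u‖)]
  -- the lower bound
  have hlow' : ∀ h₀ : H₀,
      ENNReal.ofReal (B⁻¹ * ‖k h₀‖ ^ 2) ≤
        ∫⁻ x, (‖(inner ℂ h₀ (g x) : ℂ)‖₊ : ℝ≥0∞) ^ 2 ∂μ := by
    intro h₀
    rw [hgL h₀]
    set L := ∫⁻ x, (‖(inner ℂ (u h₀) (f x) : ℂ)‖₊ : ℝ≥0∞) ^ 2 ∂μ with hLdef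
    have hLfin : L ≠ ⊤ := hfin (u h₀)
    set r : ℝ := L.toReal with hrdef
    have hr0 : 0 ≤ r := ENNReal.toReal_nonneg
    have hΘu : ‖Θ (u h₀)‖ ^ 2 = r := by
      rw [hΘnormsq (u h₀)]
    -- key identity
    have hkey : (inner ℂ (Θ (k h₀)) (Θ (u h₀)) : ℂ) = inner ℂ (k h₀) (k h₀) := by
      rw [← hSinner (k h₀) (u h₀)]
      have e1 : (inner ℂ (S (k h₀)) (u h₀) : ℂ) = inner ℂ (M (S (k h₀))) (k h₀) := by
        rw [hudef]
        simp only [ContinuousLinearMap.coe_comp', Function.comp_apply]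
        exact ContinuousLinearMap.adjoint_inner_right M (S (k h₀)) (k h₀)
      rw [e1]
      have hπk : π (k h₀) = k h₀ := hfix (k h₀) ⟨h₀, rfl⟩
      have := hMS (k h₀)
      rw [hπk] at this
      rw [this]
    have hnorm2 : ‖k h₀‖ ^ 2 ≤ Real.sqrt B * ‖k h₀‖ * Real.sqrt r := by
      have h1 : (‖k h₀‖ : ℝ) ^ 2 = RCLike.re (inner ℂ (Θ (k h₀)) (Θ (u h₀)) : ℂ) := by
        rw [hkey, inner_self_eq_norm_sq]
      have h2 : RCLike.re (inner ℂ (Θ (k h₀)) (Θ (u h₀)) : ℂ) ≤ ‖Θ (k h₀)‖ * ‖Θ (u h₀)‖ :=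
        (RCLike.re_le_norm _).trans (norm_inner_le_norm _ _)
      have h3 : ‖Θ (k h₀)‖ ≤ Real.sqrt B * ‖k h₀‖ := hΘle (k h₀)
      have h4 : ‖Θ (u h₀)‖ = Real.sqrt r := by
        rw [← Real.sqrt_sq (norm_nonneg (Θ (u h₀))), hΘu]
      rw [h1]
      calc RCLike.re (inner ℂ (Θ (k h₀)) (Θ (u h₀)) : ℂ) ≤ ‖Θ (k h₀)‖ * ‖Θ (u h₀)‖ := h2
        _ ≤ Real.sqrt B * ‖k h₀‖ * Real.sqrt r := by
            rw [h4]
            apply mul_le_mul_of_nonneg_right h3 (Real.sqrt_nonneg _)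
    have hfinal : B⁻¹ * ‖k h₀‖ ^ 2 ≤ r := by
      rcases eq_or_lt_of_le (norm_nonneg (k h₀)) with h0 | h0
      · rw [← h0]; simpa using hr0
      · have h5 : ‖k h₀‖ ≤ Real.sqrt B * Real.sqrt r := by
          nlinarith [Real.sqrt_nonneg B, Real.sqrt_nonneg r]
        have h6 : ‖k h₀‖ ^ 2 ≤ B * r := by
          have := mul_le_mul h5 h5 (norm_nonneg _) (by positivity)
          calc ‖k h₀‖ ^ 2 = ‖k h₀‖ * ‖k h₀‖ := by ring
            _ ≤ (Real.sqrt B * Real.sqrt r) * (Real.sqrt B * Real.sqrt r) := this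
            _ = (Real.sqrt B * Real.sqrt B) * (Real.sqrt r * Real.sqrt r) := by ring
            _ = B * r := by rw [Real.mul_self_sqrt hB.le, Real.mul_self_sqrt hr0]
        rw [inv_mul_le_iff₀ hB]
        linarith [h6]
    calc ENNReal.ofReal (B⁻¹ * ‖k h₀‖ ^ 2) ≤ ENNReal.ofReal r :=
          ENNReal.ofReal_le_ofReal hfinal
      _ = L := ENNReal.ofReal_toReal hLfin
  refine ⟨g, ?_, D, hD, fun h h₀ => ⟨hintg h h₀, hdual h h₀⟩, fun h₀ => ⟨hlow' h₀, hup' h₀⟩⟩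
  intro h₀
  have : (fun x => (inner ℂ h₀ (g x) : ℂ)) = fun x => (inner ℂ (u h₀) (f x) : ℂ) := by
    funext x; exact hg1 h₀ x
  rw [this]
  exact hfmeas (u h₀)
end
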